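/- arXiv:1808.05366 — 6 statements merged into one kernel-verified Lean document; each statement's English description precedes it below -/
import Mathlib

section
/- Fix (ε1,ε2) ∈ (0,1)² with ε1+ε2 < 1, n ∈ ℕ and an (n,N1,N2)-code (f1,f2,g1,g2). Let D_{Y,n} := {(x^n,y^n) : g1(f1(x^n),y^n) = H0} and let C ⊆ D_{Y,n} be any set with P_XY^n(C) ≥ (1−ε1−ε2)/2, where P_XY^n is the n-fold i.i.d. product of P_XY. Let P̃ be the conditional distribution of P_XY^n given C, let (X̃^n,Ỹ^n) ~ P̃ and M̃1 := f1(X̃^n). Then −log β2 ≤ I(M̃1;Ỹ^n) + 2·log(2/(1−ε1−ε2)), where the mutual information is computed under the joint law of (M̃1,Ỹ^n) and β2 is the type-II error probability of the code at the relay. -/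
open scoped BigOperators Classical

noncomputable section

/-- Kullback–Leibler divergence between two pmfs on a finite set (natural log,
with the convention `0·log(0/q) = 0` encoded by the term vanishing). -/
def KL {Ω : Type} [Fintype Ω] (P Q : Ω → ℝ) : ℝ :=
  ∑ ω, P ω * Real.log (P ω / Q ω)

/-- `P` is a probability mass function on the finite set `Ω`. -/
def IsPMF {Ω : Type} [Fintype Ω] (P : Ω → ℝ) : Prop :=
  (∀ ω, 0 ≤ P ω) ∧ ∑ ω, P ω = 1

/-- Pushforward (law of `φ`) of the pmf `P` under the map `φ`. -/
def pushf {Ω A : Type} [Fintype Ω] (P : Ω → ℝ) (φ : Ω → A) : A → ℝ :=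
  fun a => ∑ ω, if φ ω = a then P ω else 0

/-- Mutual information `I(φA; φB)` under the pmf `P`. -/
def MIof {Ω A B : Type} [Fintype Ω] [Fintype A] [Fintype B]
    (P : Ω → ℝ) (φA : Ω → A) (φB : Ω → B) : ℝ :=
  KL (pushf P fun ω => (φA ω, φB ω)) (fun p => pushf P φA p.1 * pushf P φB p.2)

/-- Conditional mutual information `I(φA; φB | φC)` under the pmf `P`. -/
def CMIof {Ω A B C : Type} [Fintype Ω] [Fintype A] [Fintype B] [Fintype C]
    (P : Ω → ℝ) (φA : Ω → A) (φB : Ω → B) (φC : Ω → C) : ℝ :=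
  ∑ c, pushf P φC c *
    MIof (fun ω => if φC ω = c then P ω / pushf P φC c else 0) φA φB

/-- Markov chain `φA − φB − φC` under the pmf `P`:
`P_{ABC}(a,b,c) · P_B(b) = P_{AB}(a,b) · P_{BC}(b,c)`. -/
def MarkovChain {Ω A B C : Type} [Fintype Ω]
    (P : Ω → ℝ) (φA : Ω → A) (φB : Ω → B) (φC : Ω → C) : Prop :=
  ∀ a b c,
    pushf P (fun ω => (φA ω, φB ω, φC ω)) (a, b, c) * pushf P φB b
      = pushf P (fun ω => (φA ω, φB ω)) (a, b) *
        pushf P (fun ω => (φB ω, φC ω)) (b, c)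

/-- Marginal on `X` of a pmf on `X × Y × Z`. -/
def margX {X Y Z : Type} [Fintype X] [Fintype Y] [Fintype Z]
    (P : X × Y × Z → ℝ) : X → ℝ := pushf P (fun ω => ω.1)

/-- Marginal on `Y` of a pmf on `X × Y × Z`. -/
def margY {X Y Z : Type} [Fintype X] [Fintype Y] [Fintype Z]
    (P : X × Y × Z → ℝ) : Y → ℝ := pushf P (fun ω => ω.2.1)

/-- Marginal on `Z` of a pmf on `X × Y × Z`. -/
def margZ {X Y Z : Type} [Fintype X] [Fintype Y] [Fintype Z]
    (P : X × Y × Z → ℝ) : Z → ℝ := pushf P (fun ω => ω.2.2)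

/-- Marginal on `X × Y` of a pmf on `X × Y × Z`. -/
def margXY {X Y Z : Type} [Fintype X] [Fintype Y] [Fintype Z]
    (P : X × Y × Z → ℝ) : X × Y → ℝ := pushf P (fun ω => (ω.1, ω.2.1))

/-- Marginal on `Y × Z` of a pmf on `X × Y × Z`. -/
def margYZ {X Y Z : Type} [Fintype X] [Fintype Y] [Fintype Z]
    (P : X × Y × Z → ℝ) : Y × Z → ℝ := pushf P (fun ω => (ω.2.1, ω.2.2))

/-- The conditional pmf `P_{Z|Y}(z|y)` induced by a pmf on `X × Y × Z`. -/
def condZY {X Y Z : Type} [Fintype X] [Fintype Y] [Fintype Z]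
    (P : X × Y × Z → ℝ) (y : Y) (z : Z) : ℝ :=
  margYZ P (y, z) / margY P y

/-- The Markov chain `X − Y − Z` for the source distribution `P` on `X × Y × Z`. -/
def SourceMarkov {X Y Z : Type} [Fintype X] [Fintype Y] [Fintype Z]
    (P : X × Y × Z → ℝ) : Prop :=
  ∀ x y z, P (x, y, z) * margY P y = margXY P (x, y) * margYZ P (y, z)

/-- An `(n, N1, N2)`-code for hypothesis testing over a two-hop network.
The Boolean value `true` of the decoders stands for the hypothesis `H0`,
and `false` stands for `H1`. -/
structure Code (X Y Z : Type) (n N1 N2 : ℕ) where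
  f1 : (Fin n → X) → Fin N1
  f2 : Fin N1 → (Fin n → Y) → Fin N2
  g1 : Fin N1 → (Fin n → Y) → Bool
  g2 : Fin N2 → (Fin n → Z) → Bool

/-- Type-I error probability at the relay:
`P_XYZ^n {(x,y,z) : g1(f1(x), y) = H1}`. -/
def beta1 {X Y Z : Type} [Fintype X] [Fintype Y] [Fintype Z] {n N1 N2 : ℕ}
    (P : X × Y × Z → ℝ) (C : Code X Y Z n N1 N2) : ℝ :=
  ∑ x : Fin n → X, ∑ y : Fin n → Y, ∑ z : Fin n → Z,
    if C.g1 (C.f1 x) y = false then ∏ i, P (x i, y i, z i) else 0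

/-- Type-I error probability at the receiver:
`P_XYZ^n {(x,y,z) : g2(f2(f1(x), y), z) = H1}`. -/
def eta1 {X Y Z : Type} [Fintype X] [Fintype Y] [Fintype Z] {n N1 N2 : ℕ}
    (P : X × Y × Z → ℝ) (C : Code X Y Z n N1 N2) : ℝ :=
  ∑ x : Fin n → X, ∑ y : Fin n → Y, ∑ z : Fin n → Z,
    if C.g2 (C.f2 (C.f1 x) y) z = false then ∏ i, P (x i, y i, z i) else 0

/-- Type-II error probability at the relay:
`(P_X^n ⊗ P_Y^n ⊗ P_Z^n) {(x,y,z) : g1(f1(x), y) = H0}`. -/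
def beta2 {X Y Z : Type} [Fintype X] [Fintype Y] [Fintype Z] {n N1 N2 : ℕ}
    (P : X × Y × Z → ℝ) (C : Code X Y Z n N1 N2) : ℝ :=
  ∑ x : Fin n → X, ∑ y : Fin n → Y, ∑ z : Fin n → Z,
    if C.g1 (C.f1 x) y = true then
      (∏ i, margX P (x i)) * (∏ i, margY P (y i)) * (∏ i, margZ P (z i))
    else 0

/-- Type-II error probability at the receiver:
`(P_X^n ⊗ P_Y^n ⊗ P_Z^n) {(x,y,z) : g2(f2(f1(x), y), z) = H0}`. -/
def eta2 {X Y Z : Type} [Fintype X] [Fintype Y] [Fintype Z] {n N1 N2 : ℕ}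
    (P : X × Y × Z → ℝ) (C : Code X Y Z n N1 N2) : ℝ :=
  ∑ x : Fin n → X, ∑ y : Fin n → Y, ∑ z : Fin n → Z,
    if C.g2 (C.f2 (C.f1 x) y) z = true then
      (∏ i, margX P (x i)) * (∏ i, margY P (y i)) * (∏ i, margZ P (z i))
    else 0

end

noncomputable section

/-- The n-fold i.i.d. product `P_XY^n` evaluated at a pair of sequences. -/
def prodXY {X Y Z : Type} [Fintype X] [Fintype Y] [Fintype Z] {n : ℕ}
    (P : X × Y × Z → ℝ) (p : (Fin n → X) × (Fin n → Y)) : ℝ :=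
  ∏ i, margXY P (p.1 i, p.2 i)

/-- Type-II error probability at the relay:
`(P_X^n ⊗ P_Y^n) {(x,y) : g1(f1(x), y) = H0}`. -/
def beta2relay {X Y Z : Type} [Fintype X] [Fintype Y] [Fintype Z] {n N1 N2 : ℕ}
    (P : X × Y × Z → ℝ) (C : Code X Y Z n N1 N2) : ℝ :=
  ∑ x : Fin n → X, ∑ y : Fin n → Y,
    if C.g1 (C.f1 x) y = true then
      (∏ i, margX P (x i)) * (∏ i, margY P (y i))
    else 0

section AuxLemmas

lemma pushf_nonneg' {Ω A : Type} [Fintype Ω] (P : Ω → ℝ) (hP : ∀ ω, 0 ≤ P ω)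
    (φ : Ω → A) (a : A) : 0 ≤ pushf P φ a :=
  Finset.sum_nonneg fun ω _ => by by_cases h : φ ω = a <;> simp [h, hP ω]

lemma sum_pushf' {Ω A : Type} [Fintype Ω] [Fintype A] (P : Ω → ℝ) (φ : Ω → A) :
    ∑ a, pushf P φ a = ∑ ω, P ω := by
  unfold pushf
  rw [Finset.sum_comm]
  exact Finset.sum_congr rfl fun ω _ => by simp

lemma sum_margXY_right' {X Y Z : Type} [Fintype X] [Fintype Y] [Fintype Z]
    (P : X × Y × Z → ℝ) (a : X) : ∑ b, margXY P (a, b) = margX P a := by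
  unfold margXY margX pushf
  rw [Finset.sum_comm]
  refine Finset.sum_congr rfl fun ω _ => ?_
  by_cases h : ω.1 = a <;> simp [Prod.ext_iff, h]

lemma sum_margXY_left' {X Y Z : Type} [Fintype X] [Fintype Y] [Fintype Z]
    (P : X × Y × Z → ℝ) (b : Y) : ∑ a, margXY P (a, b) = margY P b := by
  unfold margXY margY pushf
  rw [Finset.sum_comm]
  refine Finset.sum_congr rfl fun ω _ => ?_
  by_cases h : ω.2.1 = b <;> simp [Prod.ext_iff, h]

lemma sum_fun_prod' {ι κ : Type} [Fintype ι] [DecidableEq ι] [Fintype κ] (f : ι → κ → ℝ) :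
    ∑ y : ι → κ, ∏ i, f i (y i) = ∏ i, ∑ b, f i b :=
  (Fintype.prod_sum f).symm

end AuxLemmas

/-- **Change-of-measure bound on the relay type-II exponent.**
If `S ⊆ D_{Y,n}` has `P_XY^n(S) ≥ (1−ε1−ε2)/2` and `P̃` is the conditional
distribution of `P_XY^n` given `S`, with `M̃1 := f1(X̃ⁿ)`, then
`−log β2 ≤ I(M̃1; Ỹⁿ) + 2·log(2/(1−ε1−ε2))`. -/
theorem relay_exponent_bound
    (X Y Z : Type) [Fintype X] [Fintype Y] [Fintype Z]
    [Nonempty X] [Nonempty Y] [Nonempty Z]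
    (P : X × Y × Z → ℝ) (hP : IsPMF P) (hMarkov : SourceMarkov P)
    (ε1 ε2 : ℝ) (hε1 : ε1 ∈ Set.Ioo (0 : ℝ) 1) (hε2 : ε2 ∈ Set.Ioo (0 : ℝ) 1)
    (hsum : ε1 + ε2 < 1)
    (n N1 N2 : ℕ) (C : Code X Y Z n N1 N2)
    (S : Set ((Fin n → X) × (Fin n → Y)))
    (hS_sub : ∀ p ∈ S, C.g1 (C.f1 p.1) p.2 = true)
    (hS_prob : (1 - ε1 - ε2) / 2 ≤ ∑ p, if p ∈ S then prodXY P p else 0)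
    (Pt : (Fin n → X) × (Fin n → Y) → ℝ)
    (hPt : ∀ p, Pt p = (if p ∈ S then prodXY P p else 0) /
      (∑ q, if q ∈ S then prodXY P q else 0)) :
    -Real.log (beta2relay P C)
      ≤ MIof Pt (fun p => C.f1 p.1) (fun p => p.2)
        + 2 * Real.log (2 / (1 - ε1 - ε2)) := by
  obtain ⟨hPnn, hPsum⟩ := hP
  have hmXYnn : ∀ a b, 0 ≤ margXY P (a, b) := fun a b => pushf_nonneg' P hPnn _ _
  have hmXnn : ∀ a, 0 ≤ margX P a := fun a => pushf_nonneg' P hPnn _ _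
  have hmYnn : ∀ b, 0 ≤ margY P b := fun b => pushf_nonneg' P hPnn _ _
  set qS : ℝ := ∑ q, if q ∈ S then prodXY P q else 0 with hqS_def
  have hΔ : 0 < 1 - ε1 - ε2 := by linarith
  have hΔ2 : 0 < (1 - ε1 - ε2) / 2 := by linarith
  have hqS_pos : 0 < qS := lt_of_lt_of_le hΔ2 hS_prob
  have hQnn : ∀ p : (Fin n → X) × (Fin n → Y), 0 ≤ prodXY P p := fun p =>
    Finset.prod_nonneg fun i _ => hmXYnn _ _
  -- Pt facts
  have hPtnn : ∀ p, 0 ≤ Pt p := fun p => by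
    rw [hPt]
    by_cases h : p ∈ S
    · simp only [if_pos h]; exact div_nonneg (hQnn p) hqS_pos.le
    · simp [h]
  have hPt_le : ∀ p, Pt p ≤ prodXY P p / qS := fun p => by
    rw [hPt]
    by_cases h : p ∈ S
    · simp [h]
    · simp only [if_neg h, zero_div]
      exact div_nonneg (hQnn p) hqS_pos.le
  have hPt_eq_zero : ∀ p, p ∉ S → Pt p = 0 := fun p h => by simp [hPt, h]
  have hPt_sum : ∑ p, Pt p = 1 := by
    simp_rw [hPt]
    rw [← Finset.sum_div, ← hqS_def]
    exact div_self hqS_pos.ne'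
  -- distributions
  set R : Fin N1 × (Fin n → Y) → ℝ := pushf Pt (fun p => (C.f1 p.1, p.2)) with hR_def
  set R1 : Fin N1 → ℝ := pushf Pt (fun p => C.f1 p.1) with hR1_def
  set R2 : (Fin n → Y) → ℝ := pushf Pt (fun p => p.2) with hR2_def
  set A : Fin N1 → ℝ := fun m => ∑ x : Fin n → X,
    if C.f1 x = m then ∏ i, margX P (x i) else 0 with hA_def
  set B : (Fin n → Y) → ℝ := fun y => ∏ i, margY P (y i) with hB_def
  have hMIeq : MIof Pt (fun p => C.f1 p.1) (fun p => p.2)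
      = ∑ w, R w * Real.log (R w / (R1 w.1 * R2 w.2)) := rfl
  have hRnn : ∀ w, 0 ≤ R w := fun w => pushf_nonneg' Pt hPtnn _ _
  have hR1nn : ∀ m, 0 ≤ R1 m := fun m => pushf_nonneg' Pt hPtnn _ _
  have hR2nn : ∀ y, 0 ≤ R2 y := fun y => pushf_nonneg' Pt hPtnn _ _
  have hAnn : ∀ m, 0 ≤ A m := fun m => Finset.sum_nonneg fun x _ => by
    by_cases h : C.f1 x = m <;>
      simp [h, Finset.prod_nonneg fun i (_ : i ∈ Finset.univ) => hmXnn (x i)]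
  have hBnn : ∀ y, 0 ≤ B y := fun y => Finset.prod_nonneg fun i _ => hmYnn (y i)
  have hRsum : ∑ w, R w = 1 := by rw [hR_def, sum_pushf', hPt_sum]
  -- marginal sums of the product measure
  have hsumQx : ∀ x : Fin n → X,
      ∑ y : Fin n → Y, prodXY P (x, y) = ∏ i, margX P (x i) := by
    intro x
    calc ∑ y : Fin n → Y, prodXY P (x, y)
        = ∑ y : Fin n → Y, ∏ i, margXY P (x i, y i) := rfl
      _ = ∏ i, ∑ b, margXY P (x i, b) := sum_fun_prod' (fun i b => margXY P (x i, b))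
      _ = ∏ i, margX P (x i) :=
          Finset.prod_congr rfl fun i _ => sum_margXY_right' P (x i)
  have hsumQy : ∀ y : Fin n → Y,
      ∑ x : Fin n → X, prodXY P (x, y) = B y := by
    intro y
    calc ∑ x : Fin n → X, prodXY P (x, y)
        = ∑ x : Fin n → X, ∏ i, margXY P (x i, y i) := rfl
      _ = ∏ i, ∑ a, margXY P (a, y i) := sum_fun_prod' (fun i a => margXY P (a, y i))
      _ = B y := Finset.prod_congr rfl fun i _ => sum_margXY_left' P (y i)
  -- bounds on marginals of Pt
  have hR1_le : ∀ m, R1 m ≤ A m / qS := by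
    intro m
    have h1 : R1 m ≤ ∑ p : (Fin n → X) × (Fin n → Y),
        (if C.f1 p.1 = m then prodXY P p else 0) / qS := by
      rw [hR1_def]
      refine Finset.sum_le_sum fun p _ => ?_
      by_cases h : C.f1 p.1 = m
      · simp only [if_pos h]; exact hPt_le p
      · simp [h]
    refine h1.trans (le_of_eq ?_)
    rw [← Finset.sum_div]
    congr 1
    rw [Fintype.sum_prod_type]
    refine Finset.sum_congr rfl fun x _ => ?_
    by_cases h : C.f1 x = m
    · simpa [h] using hsumQx x
    · simp [h]
  have hR2_le : ∀ y, R2 y ≤ B y / qS := by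
    intro y
    have h1 : R2 y ≤ ∑ p : (Fin n → X) × (Fin n → Y),
        (if p.2 = y then prodXY P p else 0) / qS := by
      rw [hR2_def]
      refine Finset.sum_le_sum fun p _ => ?_
      by_cases h : p.2 = y
      · simp only [if_pos h]; exact hPt_le p
      · simp [h]
    refine h1.trans (le_of_eq ?_)
    rw [← Finset.sum_div]
    congr 1
    rw [Fintype.sum_prod_type]
    calc ∑ x : Fin n → X, ∑ y' : Fin n → Y, (if (x, y').2 = y then prodXY P (x, y') else 0)
        = ∑ x : Fin n → X, prodXY P (x, y) := by
          refine Finset.sum_congr rfl fun x _ => ?_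
          simp
      _ = B y := hsumQy y
  have hR_le_R1 : ∀ w : Fin N1 × (Fin n → Y), R w ≤ R1 w.1 := by
    intro w
    rw [hR_def, hR1_def]
    refine Finset.sum_le_sum fun p _ => ?_
    by_cases h : (C.f1 p.1, p.2) = w
    · subst h
      simp
    · rw [if_neg h]
      by_cases h2 : C.f1 p.1 = w.1 <;> simp [h2, hPtnn p]
  have hR_le_R2 : ∀ w : Fin N1 × (Fin n → Y), R w ≤ R2 w.2 := by
    intro w
    rw [hR_def, hR2_def]
    refine Finset.sum_le_sum fun p _ => ?_
    by_cases h : (C.f1 p.1, p.2) = w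
    · subst h
      simp
    · rw [if_neg h]
      by_cases h2 : p.2 = w.2 <;> simp [h2, hPtnn p]
  have hApos : ∀ w : Fin N1 × (Fin n → Y), 0 < R w → 0 < A w.1 := by
    intro w hw
    have h1 : R1 w.1 * qS ≤ A w.1 := (le_div_iff₀ hqS_pos).mp (hR1_le w.1)
    nlinarith [hR_le_R1 w, hqS_pos]
  have hBpos : ∀ w : Fin N1 × (Fin n → Y), 0 < R w → 0 < B w.2 := by
    intro w hw
    have h1 : R2 w.2 * qS ≤ B w.2 := (le_div_iff₀ hqS_pos).mp (hR2_le w.2)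
    nlinarith [hR_le_R2 w, hqS_pos]
  -- the support of R is inside the acceptance region
  have hsupp : ∀ w : Fin N1 × (Fin n → Y), 0 < R w → C.g1 w.1 w.2 = true := by
    intro w hw
    have hw2 : pushf Pt (fun p => (C.f1 p.1, p.2)) w ≠ 0 := by
      rw [← hR_def]; exact hw.ne'
    unfold pushf at hw2
    obtain ⟨p, -, hp⟩ := Finset.exists_ne_zero_of_sum_ne_zero hw2
    by_cases h : (C.f1 p.1, p.2) = w
    · have hPtp : Pt p ≠ 0 := by simpa [h] using hp
      have hpS : p ∈ S := by
        by_contra hns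
        exact hPtp (hPt_eq_zero p hns)
      subst h
      simpa using hS_sub p hpS
    · simp [h] at hp
  set c : ℝ := ∑ w : Fin N1 × (Fin n → Y),
    if 0 < R w then A w.1 * B w.2 else 0 with hc_def
  have hc_pos : 0 < c := by
    have hex : ∃ w, R w ≠ 0 := by
      by_contra hall
      push_neg at hall
      rw [Finset.sum_congr rfl fun w _ => hall w] at hRsum
      simp at hRsum
    obtain ⟨w0, hw0⟩ := hex
    have hw0' : 0 < R w0 := lt_of_le_of_ne (hRnn w0) (Ne.symm hw0)
    have hterm : 0 < A w0.1 * B w0.2 := mul_pos (hApos w0 hw0') (hBpos w0 hw0')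
    refine Finset.sum_pos' (fun w _ => ?_) ⟨w0, Finset.mem_univ w0, by simp [hw0', hterm]⟩
    by_cases h : 0 < R w <;>
      simp [h, mul_nonneg (hAnn w.1) (hBnn w.2)]
  -- β₂ in terms of (m, y)
  have hbeta : beta2relay P C = ∑ w : Fin N1 × (Fin n → Y),
      if C.g1 w.1 w.2 = true then A w.1 * B w.2 else 0 := by
    rw [Fintype.sum_prod_type]
    unfold beta2relay
    rw [Finset.sum_comm]
    rw [show (∑ m : Fin N1, ∑ y : Fin n → Y, if C.g1 m y = true then A m * B y else 0)
        = ∑ y : Fin n → Y, ∑ m : Fin N1, if C.g1 m y = true then A m * B y else 0 from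
      Finset.sum_comm]
    refine Finset.sum_congr rfl fun y _ => ?_
    calc ∑ x : Fin n → X, (if C.g1 (C.f1 x) y = true then
            (∏ i, margX P (x i)) * (∏ i, margY P (y i)) else 0)
        = ∑ x : Fin n → X, ∑ m : Fin N1, (if C.f1 x = m then
            (if C.g1 m y = true then (∏ i, margX P (x i)) * B y else 0) else 0) := by
          refine Finset.sum_congr rfl fun x _ => ?_
          rw [Finset.sum_ite_eq (Finset.univ) (C.f1 x)
            (fun m => if C.g1 m y = true then (∏ i, margX P (x i)) * B y else 0)]
          simp [hB_def]
      _ = ∑ m : Fin N1, ∑ x : Fin n → X, (if C.f1 x = m then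
            (if C.g1 m y = true then (∏ i, margX P (x i)) * B y else 0) else 0) :=
          Finset.sum_comm
      _ = ∑ m : Fin N1, if C.g1 m y = true then A m * B y else 0 := by
          refine Finset.sum_congr rfl fun m _ => ?_
          by_cases hg : C.g1 m y = true
          · simp only [hg, if_true, hA_def, Finset.sum_mul]
            refine Finset.sum_congr rfl fun x _ => ?_
            by_cases h : C.f1 x = m <;> simp [h]
          · simp [hg]
  have hc_le : c ≤ beta2relay P C := by
    rw [hbeta, hc_def]
    refine Finset.sum_le_sum fun w _ => ?_
    by_cases h : 0 < R w
    · simp [h, hsupp w h]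
    · by_cases hg : C.g1 w.1 w.2 = true <;>
        simp [h, hg, mul_nonneg (hAnn w.1) (hBnn w.2)]
  -- pointwise key inequalities
  have key1 : ∀ w : Fin N1 × (Fin n → Y),
      R w * Real.log (R w * c / (A w.1 * B w.2)) + R w * Real.log (qS ^ 2 / c)
        ≤ R w * Real.log (R w / (R1 w.1 * R2 w.2)) := by
    intro w
    by_cases hw : 0 < R w
    · have hR1p : 0 < R1 w.1 := lt_of_lt_of_le hw (hR_le_R1 w)
      have hR2p : 0 < R2 w.2 := lt_of_lt_of_le hw (hR_le_R2 w)
      have hAp : 0 < A w.1 := hApos w hw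
      have hBp : 0 < B w.2 := hBpos w hw
      have h1 : R1 w.1 * R2 w.2 ≤ A w.1 * B w.2 / qS ^ 2 := by
        have := mul_le_mul (hR1_le w.1) (hR2_le w.2) (hR2nn w.2)
          (div_nonneg (hAnn w.1) hqS_pos.le)
        calc R1 w.1 * R2 w.2 ≤ A w.1 / qS * (B w.2 / qS) := this
          _ = A w.1 * B w.2 / qS ^ 2 := by ring
      rw [← mul_add]
      have hlog : Real.log (R w * c / (A w.1 * B w.2)) + Real.log (qS ^ 2 / c)
          = Real.log (R w / (A w.1 * B w.2 / qS ^ 2)) := by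
        rw [← Real.log_mul (div_pos (mul_pos hw hc_pos) (mul_pos hAp hBp)).ne'
          (div_pos (pow_pos hqS_pos 2) hc_pos).ne']
        congr 1
        field_simp [hAp.ne', hBp.ne', hc_pos.ne', hqS_pos.ne']
      rw [hlog]
      refine mul_le_mul_of_nonneg_left ?_ hw.le
      apply Real.log_le_log
        (div_pos hw (div_pos (mul_pos hAp hBp) (pow_pos hqS_pos 2)))
      exact div_le_div_of_nonneg_left hw.le (mul_pos hR1p hR2p) h1
    · have h0 : R w = 0 := le_antisymm (not_lt.mp hw) (hRnn w)
      simp [h0]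
  have key2 : ∀ w : Fin N1 × (Fin n → Y),
      R w - (if 0 < R w then A w.1 * B w.2 else 0) / c
        ≤ R w * Real.log (R w * c / (A w.1 * B w.2)) := by
    intro w
    by_cases hw : 0 < R w
    · have hAp : 0 < A w.1 := hApos w hw
      have hBp : 0 < B w.2 := hBpos w hw
      simp only [if_pos hw]
      have hx : (0:ℝ) < A w.1 * B w.2 / (R w * c) :=
        div_pos (mul_pos hAp hBp) (mul_pos hw hc_pos)
      have hlog1 := Real.log_le_sub_one_of_pos hx
      have hlog2 : Real.log (R w * c / (A w.1 * B w.2))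
          = -Real.log (A w.1 * B w.2 / (R w * c)) := by
        rw [← Real.log_inv]
        congr 1
        rw [inv_div]
      calc R w - A w.1 * B w.2 / c
          = R w * (1 - A w.1 * B w.2 / (R w * c)) := by
            field_simp [hw.ne', hc_pos.ne']
        _ ≤ R w * (-Real.log (A w.1 * B w.2 / (R w * c))) := by
            refine mul_le_mul_of_nonneg_left ?_ hw.le
            linarith
        _ = R w * Real.log (R w * c / (A w.1 * B w.2)) := by rw [hlog2]
    · have h0 : R w = 0 := le_antisymm (not_lt.mp hw) (hRnn w)
      simp [h0, hw]
  -- summing up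
  have hMI : 2 * Real.log qS - Real.log c
      ≤ MIof Pt (fun p => C.f1 p.1) (fun p => p.2) := by
    have e1 : (∑ w : Fin N1 × (Fin n → Y),
        (R w - (if 0 < R w then A w.1 * B w.2 else 0) / c)) + Real.log (qS ^ 2 / c)
        = 2 * Real.log qS - Real.log c := by
      rw [Finset.sum_sub_distrib, hRsum, ← Finset.sum_div, ← hc_def,
        div_self hc_pos.ne', Real.log_div (pow_pos hqS_pos 2).ne' hc_pos.ne',
        Real.log_pow]
      push_cast
      ring
    calc 2 * Real.log qS - Real.log c
        = (∑ w : Fin N1 × (Fin n → Y),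
            (R w - (if 0 < R w then A w.1 * B w.2 else 0) / c))
            + Real.log (qS ^ 2 / c) := e1.symm
      _ ≤ (∑ w : Fin N1 × (Fin n → Y),
            R w * Real.log (R w * c / (A w.1 * B w.2))) + Real.log (qS ^ 2 / c) :=
          add_le_add_left (Finset.sum_le_sum fun w _ => key2 w) _
      _ = ∑ w : Fin N1 × (Fin n → Y),
            (R w * Real.log (R w * c / (A w.1 * B w.2))
              + R w * Real.log (qS ^ 2 / c)) := by
          rw [Finset.sum_add_distrib, ← Finset.sum_mul, hRsum, one_mul]
      _ ≤ ∑ w, R w * Real.log (R w / (R1 w.1 * R2 w.2)) :=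
          Finset.sum_le_sum fun w _ => key1 w
      _ = MIof Pt (fun p => C.f1 p.1) (fun p => p.2) := hMIeq.symm
  have hbeta_pos : 0 < beta2relay P C := lt_of_lt_of_le hc_pos hc_le
  have hlogc : Real.log c ≤ Real.log (beta2relay P C) := Real.log_le_log hc_pos hc_le
  have hlogq : Real.log ((1 - ε1 - ε2) / 2) ≤ Real.log qS := Real.log_le_log hΔ2 hS_prob
  have hlog2 : Real.log (2 / (1 - ε1 - ε2)) = -Real.log ((1 - ε1 - ε2) / 2) := by
    rw [← Real.log_inv]
    congr 1
    rw [inv_div]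
  rw [hlog2]
  linarith


end
end

section
/- Fix (ε1,ε2) ∈ (0,1)² with ε1+ε2 < 1. Let μ := (min_{y : P_Y(y)>0} P_Y(y))^{-1} and θ_n := √((3μ/n)·log(8|Y|/(1−ε1−ε2))). There exists n0 ∈ ℕ (depending only on P_Y, ε1, ε2) such that for all n ≥ n0, all N1, N2 ∈ ℕ and every (n,N1,N2)-code (f1,f2,g1,g2) with β1 ≤ ε1 and η1 ≤ ε2, the set C_n := B_n ∩ D_{Y,n} ∩ (X^n×T_n) satisfies P_XY^n(C_n) ≥ (1−ε1−ε2)/2, where D_{Y,n} := {(x^n,y^n) : g1(f1(x^n),y^n) = H0}, B_n := {(x^n,y^n) : P_{Z|Y}^n(G(f2(f1(x^n),y^n)) | y^n) ≥ (1−ε1−ε2)/(1+3ε2−ε1)} with G(m2) := {z^n : g2(m2,z^n) = H0} and P_{Z|Y}^n(·|y^n) = ∏_i P_{Z|Y}(·|y_i), and T_n := {y^n : |P̂_{y^n}(y) − P_Y(y)| ≤ θ_n·P_Y(y) for all y ∈ Y} with P̂_{y^n} the empirical distribution of y^n. -/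
open scoped BigOperators Classical

noncomputable section

/-- Empirical distribution (type) of a sequence `y ∈ Y^n`. -/
def empDist {Y : Type} [Fintype Y] {n : ℕ} (y : Fin n → Y) (a : Y) : ℝ :=
  ((Finset.univ.filter fun i => y i = a).card : ℝ) / n

/-- The product conditional probability `P_{Z|Y}^n(G(m2) | yⁿ)` of the acceptance
region `G(m2) = {zⁿ : g2(m2, zⁿ) = H0}`. -/
def condAccept {X Y Z : Type} [Fintype X] [Fintype Y] [Fintype Z] {n N1 N2 : ℕ}
    (P : X × Y × Z → ℝ) (C : Code X Y Z n N1 N2)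
    (m2 : Fin N2) (y : Fin n → Y) : ℝ :=
  ∑ z : Fin n → Z, if C.g2 m2 z = true then ∏ i, condZY P (y i) (z i) else 0

namespace TruncAux

lemma sum_prod_fn {n : ℕ} {A : Type} [Fintype A] (f : Fin n → A → ℝ) :
    ∑ g : Fin n → A, ∏ i, f i (g i) = ∏ i, ∑ a, f i a :=
  (Fintype.prod_sum f).symm

lemma exp_le_quad {x : ℝ} (h : |x| ≤ 1) : Real.exp x ≤ 1 + x + (3/4)*x^2 := by
  have hb := Real.exp_bound h (n := 2) (by norm_num)
  have h2 : ∑ m ∈ Finset.range 2, x ^ m / m.factorial = 1 + x := by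
    simp [Finset.sum_range_succ]
  rw [h2] at hb
  have h3 : Real.exp x - (1+x) ≤ |x|^2 * (3/(2*2)) := by
    calc Real.exp x - (1+x) ≤ |Real.exp x - (1+x)| := le_abs_self _
    _ ≤ |x|^2 * ((2:ℕ).succ / ((2:ℕ).factorial * 2)) := hb
    _ = |x|^2 * (3/(2*2)) := by norm_num [Nat.factorial]
  nlinarith [sq_abs x]

lemma pushf_nonneg {Ω A : Type} [Fintype Ω] (P : Ω → ℝ) (hP : ∀ ω, 0 ≤ P ω)
    (φ : Ω → A) (a : A) : 0 ≤ pushf P φ a := by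
  apply Finset.sum_nonneg; intro ω _
  split
  · exact hP ω
  · exact le_rfl

lemma pushf_eq {Ω A B : Type} [Fintype Ω] [Fintype B] (P : Ω → ℝ) (φ : Ω → A) (a : A)
    (e : B → Ω) (hinj : Function.Injective e)
    (hmem : ∀ ω, φ ω = a ↔ ∃ b, e b = ω) :
    pushf P φ a = ∑ b, P (e b) := by
  rw [pushf, ← Finset.sum_filter]
  refine (Finset.sum_bij (fun b _ => e b) ?_ ?_ ?_ ?_).symm
  · intro b _
    exact Finset.mem_filter.2 ⟨Finset.mem_univ _, (hmem (e b)).2 ⟨b, rfl⟩⟩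
  · intro b1 _ b2 _ h; exact hinj h
  · intro ω hω
    rcases (hmem ω).1 (Finset.mem_filter.1 hω).2 with ⟨b, rfl⟩
    exact ⟨b, Finset.mem_univ b, rfl⟩
  · intros; rfl

section Marginals

variable {X Y Z : Type} [Fintype X] [Fintype Y] [Fintype Z] (P : X × Y × Z → ℝ)

lemma margXY_apply (x : X) (y : Y) : margXY P (x, y) = ∑ z, P (x, y, z) := by
  apply pushf_eq P _ _ (fun z => (x, y, z))
  · intro z1 z2 h; exact (Prod.ext_iff.1 (Prod.ext_iff.1 h).2).2
  · rintro ⟨x', y', z'⟩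
    constructor
    · intro h
      obtain ⟨h1, h2⟩ := Prod.ext_iff.1 h
      exact ⟨z', by simp_all⟩
    · rintro ⟨b, h⟩; rw [← h]

lemma margYZ_apply (y : Y) (z : Z) : margYZ P (y, z) = ∑ x, P (x, y, z) := by
  apply pushf_eq P _ _ (fun x => (x, y, z))
  · intro x1 x2 h; exact (Prod.ext_iff.1 h).1
  · rintro ⟨x', y', z'⟩
    constructor
    · intro h
      obtain ⟨h1, h2⟩ := Prod.ext_iff.1 h
      exact ⟨x', by simp_all⟩
    · rintro ⟨b, h⟩; rw [← h]

lemma margY_apply (y : Y) : margY P y = ∑ x, ∑ z, P (x, y, z) := by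
  have := pushf_eq P (fun ω => ω.2.1) y (fun q : X × Z => (q.1, y, q.2)) ?_ ?_
  · rw [margY, this, Fintype.sum_prod_type]
  · intro q1 q2 h
    obtain ⟨h1, h2⟩ := Prod.ext_iff.1 h
    exact Prod.ext h1 (Prod.ext_iff.1 h2).2
  · rintro ⟨x', y', z'⟩
    constructor
    · intro h; exact ⟨(x', z'), by simp_all⟩
    · rintro ⟨b, h⟩; rw [← h]

lemma margX_apply (x : X) : margX P x = ∑ y, ∑ z, P (x, y, z) := by
  have := pushf_eq P (fun ω => ω.1) x (fun q : Y × Z => (x, q.1, q.2)) ?_ ?_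
  · rw [margX, this, Fintype.sum_prod_type]
  · intro q1 q2 h
    obtain ⟨h1, h2⟩ := Prod.ext_iff.1 h
    exact Prod.ext (Prod.ext_iff.1 h2).1 (Prod.ext_iff.1 h2).2
  · rintro ⟨x', y', z'⟩
    constructor
    · intro h; exact ⟨(y', z'), by simp_all⟩
    · rintro ⟨b, h⟩; rw [← h]

lemma margXY_nonneg (hP : IsPMF P) (q : X × Y) : 0 ≤ margXY P q := pushf_nonneg P hP.1 _ _
lemma margY_nonneg (hP : IsPMF P) (y : Y) : 0 ≤ margY P y := pushf_nonneg P hP.1 _ _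
lemma margYZ_nonneg (hP : IsPMF P) (q : Y × Z) : 0 ≤ margYZ P q := pushf_nonneg P hP.1 _ _
lemma margX_nonneg (hP : IsPMF P) (x : X) : 0 ≤ margX P x := pushf_nonneg P hP.1 _ _

lemma sum_margXY_fst (y : Y) : ∑ x, margXY P (x, y) = margY P y := by
  rw [margY_apply]
  exact Finset.sum_congr rfl fun x _ => margXY_apply P x y

lemma sum_margXY_snd (x : X) : ∑ y, margXY P (x, y) = margX P x := by
  rw [margX_apply]
  exact Finset.sum_congr rfl fun y _ => margXY_apply P x y

lemma sum_margYZ_snd (y : Y) : ∑ z, margYZ P (y, z) = margY P y := by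
  rw [margY_apply, Finset.sum_comm]
  exact Finset.sum_congr rfl fun z _ => margYZ_apply P y z

lemma sum_margX (hP : IsPMF P) : ∑ x, margX P x = 1 := by
  have : ∑ x, margX P x = ∑ ω : X × Y × Z, P ω := by
    rw [Fintype.sum_prod_type]
    apply Finset.sum_congr rfl
    intro x _
    rw [margX_apply, Fintype.sum_prod_type]
  rw [this, hP.2]

lemma sum_margY (hP : IsPMF P) : ∑ y, margY P y = 1 := by
  have h1 : ∑ y, margY P y = ∑ x, ∑ y, ∑ z, P (x, y, z) := by
    rw [Finset.sum_congr rfl fun y (_ : y ∈ Finset.univ) => margY_apply P y]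
    exact Finset.sum_comm
  have h2 : ∑ ω : X × Y × Z, P ω = ∑ x, ∑ y, ∑ z, P (x, y, z) := by
    rw [Fintype.sum_prod_type]
    exact Finset.sum_congr rfl fun x _ => Fintype.sum_prod_type (fun q : Y × Z => P (x, q.1, q.2))
  rw [h1, ← h2, hP.2]

lemma margXY_le_margY (hP : IsPMF P) (x : X) (y : Y) : margXY P (x, y) ≤ margY P y := by
  rw [← sum_margXY_fst]
  exact Finset.single_le_sum (fun x' _ => margXY_nonneg P hP (x', y)) (Finset.mem_univ x)

lemma condZY_nonneg (hP : IsPMF P) (y : Y) (z : Z) : 0 ≤ condZY P y z :=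
  div_nonneg (margYZ_nonneg P hP _) (margY_nonneg P hP _)

lemma sum_condZY {y : Y} (hy : margY P y ≠ 0) : ∑ z, condZY P y z = 1 := by
  simp only [condZY]
  rw [← Finset.sum_div, sum_margYZ_snd, div_self hy]

lemma P_le_margY (hP : IsPMF P) (x : X) (y : Y) (z : Z) : P (x, y, z) ≤ margY P y := by
  rw [margY_apply]
  calc P (x, y, z) ≤ ∑ z', P (x, y, z') :=
        Finset.single_le_sum (f := fun z' => P (x, y, z')) (fun z' _ => hP.1 _)
          (Finset.mem_univ z)
    _ ≤ ∑ x', ∑ z', P (x', y, z') :=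
        Finset.single_le_sum (f := fun x' => ∑ z', P (x', y, z'))
          (fun x' _ => Finset.sum_nonneg fun z' _ => hP.1 _) (Finset.mem_univ x)

lemma factorization (hP : IsPMF P) (hM : SourceMarkov P) (x : X) (y : Y) (z : Z) :
    P (x, y, z) = margXY P (x, y) * condZY P y z := by
  by_cases h : margY P y = 0
  · have hz : P (x, y, z) = 0 :=
      le_antisymm (h ▸ P_le_margY P hP x y z) (hP.1 _)
    rw [hz, condZY, h, div_zero, mul_zero]
  · rw [condZY, ← mul_div_assoc, eq_div_iff h]
    exact hM x y z

end Marginals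

section Chernoff

variable {Y : Type} [Fintype Y] {n : ℕ}

/-- count of occurrences of `a` -/
def cnt (a : Y) (y : Fin n → Y) : ℝ := ((Finset.univ.filter fun i => y i = a).card : ℝ)

omit [Fintype Y] in
lemma cnt_eq_sum (a : Y) (y : Fin n → Y) :
    cnt a y = ∑ i, (if y i = a then (1:ℝ) else 0) := by
  rw [cnt, Finset.sum_boole]

lemma sum_ite_single {A : Type} [Fintype A] (a : A) (c : ℝ) :
    ∑ b : A, (if b = a then c else 0) = c := by
  rw [Finset.sum_eq_single a]
  · simp
  · intro b _ hb; simp [hb]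
  · intro h; exact absurd (Finset.mem_univ a) h

lemma mgf (Q : Y → ℝ) (a : Y) (s : ℝ) (hQ1 : ∑ b, Q b = 1) :
    ∑ y : Fin n → Y, (∏ i, Q (y i)) * Real.exp (s * cnt a y)
      = (1 + Q a * (Real.exp s - 1))^n := by
  have key : ∀ y : Fin n → Y,
      (∏ i, Q (y i)) * Real.exp (s * cnt a y)
        = ∏ i, (Q (y i) * Real.exp (s * (if y i = a then (1:ℝ) else 0))) := by
    intro y
    rw [Finset.prod_mul_distrib, ← Real.exp_sum]
    congr 2
    rw [cnt_eq_sum, Finset.mul_sum]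
  rw [Finset.sum_congr rfl fun y _ => key y]
  rw [sum_prod_fn (f := fun _ b => Q b * Real.exp (s * (if b = a then (1:ℝ) else 0)))]
  rw [Finset.prod_const, Finset.card_univ, Fintype.card_fin]
  congr 1
  have hsplit : ∀ b : Y, Q b * Real.exp (s * (if b = a then (1:ℝ) else 0))
      = Q b + (if b = a then Q a * (Real.exp s - 1) else 0) := by
    intro b
    by_cases hb : b = a
    · subst hb; simp; ring
    · simp [hb]
  rw [Finset.sum_congr rfl fun b _ => hsplit b, Finset.sum_add_distrib, hQ1,
    sum_ite_single]

lemma tail_upper (hn : 0 < n) (Q : Y → ℝ) (hQ0 : ∀ b, 0 ≤ Q b) (hQ1 : ∑ b, Q b = 1)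
    (a : Y) {θ : ℝ} (hθ0 : 0 ≤ θ) (hθ1 : θ ≤ 1) :
    ∑ y : Fin n → Y,
        (if (n : ℝ) * Q a * (1 + θ) < cnt a y then ∏ i, Q (y i) else 0)
      ≤ Real.exp (-((n : ℝ) * Q a * θ^2)/3) := by
  set p := Q a with hp
  have hp0 : 0 ≤ p := hQ0 a
  set s : ℝ := 2*θ/3 with hs
  have hs0 : 0 ≤ s := by positivity
  have hsabs : |s| ≤ 1 := by rw [abs_of_nonneg hs0]; linarith
  have hexp : Real.exp s - 1 ≤ s + (3/4)*s^2 := by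
    have := exp_le_quad hsabs; linarith
  have step1 : ∑ y : Fin n → Y,
      (if (n : ℝ) * p * (1 + θ) < cnt a y then ∏ i, Q (y i) else 0)
      ≤ ∑ y : Fin n → Y, Real.exp (-(s * ((n:ℝ) * p * (1+θ)))) *
          ((∏ i, Q (y i)) * Real.exp (s * cnt a y)) := by
    apply Finset.sum_le_sum
    intro y _
    have hprod : 0 ≤ ∏ i, Q (y i) := Finset.prod_nonneg fun i _ => hQ0 _
    split
    · rename_i hc
      have h1 : (1:ℝ) ≤ Real.exp (-(s * ((n:ℝ)*p*(1+θ)))) * Real.exp (s * cnt a y) := by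
        rw [← Real.exp_add]
        rw [show (-(s * ((n:ℝ)*p*(1+θ))) + s * cnt a y) = s * (cnt a y - (n:ℝ)*p*(1+θ)) by ring]
        have : 0 ≤ s * (cnt a y - (n:ℝ)*p*(1+θ)) :=
          mul_nonneg hs0 (by linarith)
        calc (1:ℝ) = Real.exp 0 := Real.exp_zero.symm
        _ ≤ _ := Real.exp_le_exp.2 this
      calc ∏ i, Q (y i) = (∏ i, Q (y i)) * 1 := (mul_one _).symm
      _ ≤ (∏ i, Q (y i)) * (Real.exp (-(s * ((n:ℝ)*p*(1+θ)))) * Real.exp (s * cnt a y)) :=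
          mul_le_mul_of_nonneg_left h1 hprod
      _ = _ := by ring
    · positivity
  have step2 : ∑ y : Fin n → Y, Real.exp (-(s * ((n:ℝ) * p * (1+θ)))) *
          ((∏ i, Q (y i)) * Real.exp (s * cnt a y))
      = Real.exp (-(s * ((n:ℝ) * p * (1+θ)))) * (1 + p * (Real.exp s - 1))^n := by
    rw [← Finset.mul_sum, mgf Q a s hQ1]
  have hbase0 : 0 ≤ 1 + p * (Real.exp s - 1) := by
    have : (1:ℝ) ≤ Real.exp s := by
      rw [← Real.exp_zero]; exact Real.exp_le_exp.2 hs0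
    nlinarith
  have step3 : (1 + p * (Real.exp s - 1))^n ≤ Real.exp ((n:ℝ) * (p * (Real.exp s - 1))) := by
    calc (1 + p * (Real.exp s - 1))^n ≤ (Real.exp (p * (Real.exp s - 1)))^n := by
          apply pow_le_pow_left₀ hbase0
          have := Real.add_one_le_exp (p * (Real.exp s - 1)); linarith
      _ = Real.exp ((n:ℝ) * (p * (Real.exp s - 1))) := by
          rw [← Real.exp_nat_mul]
  have hfinal : -(s * ((n:ℝ) * p * (1+θ))) + (n:ℝ) * (p * (Real.exp s - 1))
      ≤ -((n : ℝ) * p * θ^2)/3 := by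
    have hnp : 0 ≤ (n:ℝ) * p := by positivity
    have h2 : (n:ℝ) * (p * (Real.exp s - 1)) ≤ (n:ℝ) * (p * (s + (3/4)*s^2)) := by
      apply mul_le_mul_of_nonneg_left _ (by positivity)
      exact mul_le_mul_of_nonneg_left hexp hp0
    have h3 : -(s * ((n:ℝ) * p * (1+θ))) + (n:ℝ) * (p * (s + (3/4)*s^2))
        = (n:ℝ) * p * (-(s*θ) + (3/4)*s^2) := by ring
    have h4 : -(s*θ) + (3/4)*s^2 = -θ^2/3 := by rw [hs]; ring
    nlinarith
  calc ∑ y : Fin n → Y, (if (n : ℝ) * Q a * (1 + θ) < cnt a y then ∏ i, Q (y i) else 0)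
      ≤ Real.exp (-(s * ((n:ℝ) * p * (1+θ)))) * (1 + p * (Real.exp s - 1))^n := by
        rw [← step2]; exact step1
    _ ≤ Real.exp (-(s * ((n:ℝ) * p * (1+θ)))) * Real.exp ((n:ℝ) * (p * (Real.exp s - 1))) :=
        mul_le_mul_of_nonneg_left step3 (Real.exp_nonneg _)
    _ = Real.exp (-(s * ((n:ℝ) * p * (1+θ))) + (n:ℝ) * (p * (Real.exp s - 1))) :=
        (Real.exp_add _ _).symm
    _ ≤ Real.exp (-((n : ℝ) * Q a * θ^2)/3) := Real.exp_le_exp.2 hfinal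

lemma tail_lower (hn : 0 < n) (Q : Y → ℝ) (hQ0 : ∀ b, 0 ≤ Q b) (hQ1 : ∑ b, Q b = 1)
    (a : Y) {θ : ℝ} (hθ0 : 0 ≤ θ) (hθ1 : θ ≤ 1) :
    ∑ y : Fin n → Y,
        (if cnt a y < (n : ℝ) * Q a * (1 - θ) then ∏ i, Q (y i) else 0)
      ≤ Real.exp (-((n : ℝ) * Q a * θ^2)/3) := by
  set p := Q a with hp
  have hp0 : 0 ≤ p := hQ0 a
  set s : ℝ := 2*θ/3 with hs
  have hs0 : 0 ≤ s := by positivity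
  have hsabs : |(-s)| ≤ 1 := by rw [abs_neg, abs_of_nonneg hs0]; linarith
  have hexp : Real.exp (-s) - 1 ≤ -s + (3/4)*s^2 := by
    have := exp_le_quad hsabs; nlinarith [this]
  have step1 : ∑ y : Fin n → Y,
      (if cnt a y < (n : ℝ) * p * (1 - θ) then ∏ i, Q (y i) else 0)
      ≤ ∑ y : Fin n → Y, Real.exp (s * ((n:ℝ) * p * (1-θ))) *
          ((∏ i, Q (y i)) * Real.exp ((-s) * cnt a y)) := by
    apply Finset.sum_le_sum
    intro y _
    have hprod : 0 ≤ ∏ i, Q (y i) := Finset.prod_nonneg fun i _ => hQ0 _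
    split
    · rename_i hc
      have h1 : (1:ℝ) ≤ Real.exp (s * ((n:ℝ)*p*(1-θ))) * Real.exp ((-s) * cnt a y) := by
        rw [← Real.exp_add]
        rw [show (s * ((n:ℝ)*p*(1-θ)) + (-s) * cnt a y) = s * ((n:ℝ)*p*(1-θ) - cnt a y) by ring]
        have : 0 ≤ s * ((n:ℝ)*p*(1-θ) - cnt a y) := mul_nonneg hs0 (by linarith)
        calc (1:ℝ) = Real.exp 0 := Real.exp_zero.symm
        _ ≤ _ := Real.exp_le_exp.2 this
      calc ∏ i, Q (y i) = (∏ i, Q (y i)) * 1 := (mul_one _).symm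
      _ ≤ (∏ i, Q (y i)) * (Real.exp (s * ((n:ℝ)*p*(1-θ))) * Real.exp ((-s) * cnt a y)) :=
          mul_le_mul_of_nonneg_left h1 hprod
      _ = _ := by ring
    · positivity
  have step2 : ∑ y : Fin n → Y, Real.exp (s * ((n:ℝ) * p * (1-θ))) *
          ((∏ i, Q (y i)) * Real.exp ((-s) * cnt a y))
      = Real.exp (s * ((n:ℝ) * p * (1-θ))) * (1 + p * (Real.exp (-s) - 1))^n := by
    rw [← Finset.mul_sum, mgf Q a (-s) hQ1]
  have hp1 : p ≤ 1 := by
    rw [← hQ1]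
    exact Finset.single_le_sum (fun b _ => hQ0 b) (Finset.mem_univ a)
  have hbase0 : 0 ≤ 1 + p * (Real.exp (-s) - 1) := by
    have h1 : 0 < Real.exp (-s) := Real.exp_pos _
    nlinarith
  have step3 : (1 + p * (Real.exp (-s) - 1))^n
      ≤ Real.exp ((n:ℝ) * (p * (Real.exp (-s) - 1))) := by
    calc (1 + p * (Real.exp (-s) - 1))^n ≤ (Real.exp (p * (Real.exp (-s) - 1)))^n := by
          apply pow_le_pow_left₀ hbase0
          have := Real.add_one_le_exp (p * (Real.exp (-s) - 1)); linarith
      _ = _ := by rw [← Real.exp_nat_mul]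
  have hfinal : s * ((n:ℝ) * p * (1-θ)) + (n:ℝ) * (p * (Real.exp (-s) - 1))
      ≤ -((n : ℝ) * p * θ^2)/3 := by
    have hnp : 0 ≤ (n:ℝ) * p := by positivity
    have h2 : (n:ℝ) * (p * (Real.exp (-s) - 1)) ≤ (n:ℝ) * (p * (-s + (3/4)*s^2)) := by
      apply mul_le_mul_of_nonneg_left _ (by positivity)
      exact mul_le_mul_of_nonneg_left hexp hp0
    have h3 : s * ((n:ℝ) * p * (1-θ)) + (n:ℝ) * (p * (-s + (3/4)*s^2))
        = (n:ℝ) * p * (-(s*θ) + (3/4)*s^2) := by ring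
    have h4 : -(s*θ) + (3/4)*s^2 = -θ^2/3 := by rw [hs]; ring
    nlinarith
  calc ∑ y : Fin n → Y, (if cnt a y < (n : ℝ) * Q a * (1 - θ) then ∏ i, Q (y i) else 0)
      ≤ Real.exp (s * ((n:ℝ) * p * (1-θ))) * (1 + p * (Real.exp (-s) - 1))^n := by
        rw [← step2]; exact step1
    _ ≤ Real.exp (s * ((n:ℝ) * p * (1-θ))) * Real.exp ((n:ℝ) * (p * (Real.exp (-s) - 1))) :=
        mul_le_mul_of_nonneg_left step3 (Real.exp_nonneg _)
    _ = Real.exp (s * ((n:ℝ) * p * (1-θ)) + (n:ℝ) * (p * (Real.exp (-s) - 1))) :=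
        (Real.exp_add _ _).symm
    _ ≤ _ := Real.exp_le_exp.2 hfinal

lemma chernoff (hn : 0 < n) (Q : Y → ℝ) (hQ0 : ∀ b, 0 ≤ Q b) (hQ1 : ∑ b, Q b = 1)
    (a : Y) {θ : ℝ} (hθ0 : 0 ≤ θ) (hθ1 : θ ≤ 1) :
    ∑ y : Fin n → Y,
        (if ¬ (|empDist y a - Q a| ≤ θ * Q a) then ∏ i, Q (y i) else 0)
      ≤ 2 * Real.exp (-((n : ℝ) * Q a * θ^2)/3) := by
  have hn0 : (0:ℝ) < (n:ℝ) := Nat.cast_pos.2 hn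
  have key : ∀ y : Fin n → Y,
      (if ¬ (|empDist y a - Q a| ≤ θ * Q a) then ∏ i, Q (y i) else 0)
      ≤ (if (n : ℝ) * Q a * (1 + θ) < cnt a y then ∏ i, Q (y i) else 0)
        + (if cnt a y < (n : ℝ) * Q a * (1 - θ) then ∏ i, Q (y i) else 0) := by
    intro y
    have hprod : 0 ≤ ∏ i, Q (y i) := Finset.prod_nonneg fun i _ => hQ0 _
    by_cases h : |empDist y a - Q a| ≤ θ * Q a
    · simp only [h, not_true, if_false]
      have h1 : 0 ≤ (if (n : ℝ) * Q a * (1 + θ) < cnt a y then ∏ i, Q (y i) else 0) := by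
        split
        · exact hprod
        · exact le_rfl
      have h2 : 0 ≤ (if cnt a y < (n : ℝ) * Q a * (1 - θ) then ∏ i, Q (y i) else 0) := by
        split
        · exact hprod
        · exact le_rfl
      linarith
    · simp only [h, not_false_iff, if_true]
      have habs : θ * Q a < |empDist y a - Q a| := lt_of_not_ge h
      have hemp : empDist y a = cnt a y / n := rfl
      rcases lt_abs.1 habs with hgt | hlt
      · have h1 : (n : ℝ) * Q a * (1 + θ) < cnt a y := by
          rw [hemp] at hgt
          have h2 : (Q a + θ * Q a) * n < cnt a y :=
            (lt_div_iff₀ hn0).1 (by linarith : Q a + θ * Q a < cnt a y / n)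
          nlinarith
        rw [if_pos h1]
        have h2 : 0 ≤ (if cnt a y < (n : ℝ) * Q a * (1 - θ) then ∏ i, Q (y i) else 0) := by
          split
          · exact hprod
          · exact le_rfl
        linarith
      · have h1 : cnt a y < (n : ℝ) * Q a * (1 - θ) := by
          rw [hemp] at hlt
          have h2 : cnt a y < (Q a - θ * Q a) * n :=
            (div_lt_iff₀ hn0).1 (by linarith : cnt a y / n < Q a - θ * Q a)
          nlinarith
        rw [if_pos h1]
        have h2 : 0 ≤ (if (n : ℝ) * Q a * (1 + θ) < cnt a y then ∏ i, Q (y i) else 0) := by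
          split
          · exact hprod
          · exact le_rfl
        linarith
  calc ∑ y : Fin n → Y, (if ¬ (|empDist y a - Q a| ≤ θ * Q a) then ∏ i, Q (y i) else 0)
      ≤ ∑ y : Fin n → Y,
          ((if (n : ℝ) * Q a * (1 + θ) < cnt a y then ∏ i, Q (y i) else 0)
            + (if cnt a y < (n : ℝ) * Q a * (1 - θ) then ∏ i, Q (y i) else 0)) :=
        Finset.sum_le_sum fun y _ => key y
    _ = (∑ y : Fin n → Y, (if (n : ℝ) * Q a * (1 + θ) < cnt a y then ∏ i, Q (y i) else 0))
        + ∑ y : Fin n → Y, (if cnt a y < (n : ℝ) * Q a * (1 - θ) then ∏ i, Q (y i) else 0) :=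
        Finset.sum_add_distrib
    _ ≤ Real.exp (-((n : ℝ) * Q a * θ^2)/3) + Real.exp (-((n : ℝ) * Q a * θ^2)/3) :=
        add_le_add (tail_upper hn Q hQ0 hQ1 a hθ0 hθ1) (tail_lower hn Q hQ0 hQ1 a hθ0 hθ1)
    _ = 2 * Real.exp (-((n : ℝ) * Q a * θ^2)/3) := by ring

end Chernoff

end TruncAux

/-- **The truncation event has large probability.**
For all sufficiently large `n` and any `(n,N1,N2)`-code with `β1 ≤ ε1` and
`η1 ≤ ε2`, the set `C_n = B_n ∩ D_{Y,n} ∩ (Xⁿ × T_n)` satisfies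
`P_XY^n(C_n) ≥ (1−ε1−ε2)/2`. -/
theorem truncation_set_prob
    (X Y Z : Type) [Fintype X] [Fintype Y] [Fintype Z]
    [Nonempty X] [Nonempty Y] [Nonempty Z]
    (P : X × Y × Z → ℝ) (hP : IsPMF P) (hMarkov : SourceMarkov P)
    (ε1 ε2 : ℝ) (hε1 : ε1 ∈ Set.Ioo (0 : ℝ) 1) (hε2 : ε2 ∈ Set.Ioo (0 : ℝ) 1)
    (hsum : ε1 + ε2 < 1)
    (μ : ℝ) (hμ : IsLeast {r : ℝ | ∃ y, 0 < margY P y ∧ margY P y = r} μ⁻¹) :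
    ∃ n0 : ℕ, ∀ n : ℕ, n0 ≤ n → ∀ N1 N2 : ℕ, ∀ C : Code X Y Z n N1 N2,
      beta1 P C ≤ ε1 → eta1 P C ≤ ε2 →
      (1 - ε1 - ε2) / 2 ≤
        ∑ p : (Fin n → X) × (Fin n → Y),
          if ((1 - ε1 - ε2) / (1 + 3 * ε2 - ε1)
                ≤ condAccept P C (C.f2 (C.f1 p.1) p.2) p.2) ∧
              C.g1 (C.f1 p.1) p.2 = true ∧
              (∀ a : Y, |empDist p.2 a - margY P a| ≤
                Real.sqrt ((3 * μ / n) *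
                  Real.log (8 * (Fintype.card Y : ℝ) / (1 - ε1 - ε2)))
                * margY P a) then
            prodXY P p
          else 0 := by
  classical
  obtain ⟨⟨y0, hy0pos, hy0eq⟩, hlb⟩ := hμ
  have hδ : 0 < 1 - ε1 - ε2 := by linarith
  have hcY : (0:ℝ) < (Fintype.card Y : ℝ) := by exact_mod_cast Fintype.card_pos
  have hcY1 : (1:ℝ) ≤ (Fintype.card Y : ℝ) := by exact_mod_cast Fintype.card_pos
  have hK : (1:ℝ) < 8 * (Fintype.card Y : ℝ) / (1 - ε1 - ε2) := by
    rw [lt_div_iff₀ hδ]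
    have h1 : 0 < ε1 := hε1.1
    have h2 : 0 < ε2 := hε2.1
    linarith [hcY1]
  have hμinv : 0 < μ⁻¹ := hy0eq ▸ hy0pos
  have hμ0 : 0 < μ := inv_pos.1 hμinv
  set L : ℝ := Real.log (8 * (Fintype.card Y : ℝ) / (1 - ε1 - ε2)) with hLdef
  have hL0 : 0 < L := Real.log_pos hK
  refine ⟨⌈3*μ*L⌉₊ + 1, ?_⟩
  intro n hn N1 N2 C hb1 he1
  have hn1 : 0 < n := Nat.lt_of_lt_of_le (Nat.succ_pos _) hn
  have hnr : (0:ℝ) < (n:ℝ) := Nat.cast_pos.2 hn1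
  have hnL : 3*μ*L ≤ (n:ℝ) :=
    le_trans (Nat.le_ceil _) (by exact_mod_cast Nat.le_of_succ_le hn)
  set θ : ℝ := Real.sqrt (3 * μ / (n:ℝ) * L) with hθdef
  have hθarg : 0 ≤ 3*μ/(n:ℝ) * L := by positivity
  have hθ0 : 0 ≤ θ := Real.sqrt_nonneg _
  have hθsq : θ^2 = 3*μ/(n:ℝ) * L := Real.sq_sqrt hθarg
  have hθ1 : θ ≤ 1 := by
    rw [hθdef, show (1:ℝ) = Real.sqrt 1 from Real.sqrt_one.symm]
    apply Real.sqrt_le_sqrt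
    rw [div_mul_eq_mul_div, div_le_one hnr]
    linarith
  -- basic pmf facts
  have hQ0 : ∀ b : Y, 0 ≤ margY P b := fun b => TruncAux.margY_nonneg P hP b
  have hQ1 : ∑ b, margY P b = 1 := TruncAux.sum_margY P hP
  have hw0 : ∀ p : (Fin n → X) × (Fin n → Y), 0 ≤ prodXY P p := fun p =>
    Finset.prod_nonneg fun i _ => TruncAux.margXY_nonneg P hP _
  have hw1 : ∑ p : (Fin n → X) × (Fin n → Y), prodXY P p = 1 := by
    rw [Fintype.sum_prod_type]
    have inner : ∀ x : Fin n → X,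
        ∑ y : Fin n → Y, prodXY P (x, y) = ∏ i, margX P (x i) := by
      intro x
      have h0 : ∀ y : Fin n → Y, prodXY P (x, y) = ∏ i, margXY P (x i, y i) :=
        fun y => rfl
      rw [Finset.sum_congr rfl fun y _ => h0 y,
        TruncAux.sum_prod_fn (f := fun i b => margXY P (x i, b))]
      exact Finset.prod_congr rfl fun i _ => TruncAux.sum_margXY_snd P (x i)
    rw [Finset.sum_congr rfl fun x _ => inner x,
      TruncAux.sum_prod_fn (f := fun (_ : Fin n) (b : X) => margX P b)]
    rw [Finset.prod_congr rfl fun i (_ : i ∈ Finset.univ) => TruncAux.sum_margX P hP,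
      Finset.prod_const_one]
  -- beta1 identity
  have hbeta : ∑ p : (Fin n → X) × (Fin n → Y),
      (if C.g1 (C.f1 p.1) p.2 = false then prodXY P p else 0) = beta1 P C := by
    simp only [beta1]
    rw [Fintype.sum_prod_type]
    apply Finset.sum_congr rfl; intro x _
    apply Finset.sum_congr rfl; intro y _
    by_cases hc : C.g1 (C.f1 x) y = false
    · rw [if_pos hc,
        Finset.sum_congr rfl fun z (_ : z ∈ Finset.univ) => if_pos hc]
      show prodXY P (x, y) = ∑ z : Fin n → Z, ∏ i, P (x i, y i, z i)
      rw [TruncAux.sum_prod_fn (f := fun i c => P (x i, y i, c))]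
      exact Finset.prod_congr rfl fun i _ => TruncAux.margXY_apply P (x i) (y i)
    · rw [if_neg hc]
      exact (Finset.sum_eq_zero fun z _ => if_neg hc).symm
  -- the residual conditional mass R
  set R : (Fin n → X) × (Fin n → Y) → ℝ :=
    fun p => ∑ z : Fin n → Z,
      (if C.g2 (C.f2 (C.f1 p.1) p.2) z = false then ∏ i, condZY P (p.2 i) (z i) else 0)
    with hR
  have hR0 : ∀ p : (Fin n → X) × (Fin n → Y), 0 ≤ R p := by
    intro p
    simp only [hR]
    apply Finset.sum_nonneg; intro z _
    split
    · exact Finset.prod_nonneg fun i _ => TruncAux.condZY_nonneg P hP _ _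
    · exact le_rfl
  have heta : ∑ p : (Fin n → X) × (Fin n → Y), prodXY P p * R p = eta1 P C := by
    simp only [eta1, hR]
    rw [Fintype.sum_prod_type]
    apply Finset.sum_congr rfl; intro x _
    apply Finset.sum_congr rfl; intro y _
    rw [Finset.mul_sum]
    apply Finset.sum_congr rfl; intro z _
    by_cases hc : C.g2 (C.f2 (C.f1 x) y) z = false
    · rw [if_pos hc, if_pos hc]
      show prodXY P (x, y) * ∏ i, condZY P (y i) (z i) = ∏ i, P (x i, y i, z i)
      rw [show prodXY P (x, y) = ∏ i, margXY P (x i, y i) from rfl,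
        ← Finset.prod_mul_distrib]
      exact (Finset.prod_congr rfl fun i _ =>
        TruncAux.factorization P hP hMarkov (x i) (y i) (z i)).symm
    · rw [if_neg hc, if_neg hc, mul_zero]
  have hAR : ∀ p : (Fin n → X) × (Fin n → Y), prodXY P p ≠ 0 →
      condAccept P C (C.f2 (C.f1 p.1) p.2) p.2 + R p = 1 := by
    rintro ⟨x, y⟩ hw
    have hY : ∀ i, margY P (y i) ≠ 0 := by
      intro i h0
      apply hw
      show ∏ i, margXY P (x i, y i) = 0
      refine Finset.prod_eq_zero (Finset.mem_univ i) ?_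
      have h1 := TruncAux.margXY_le_margY P hP (x i) (y i)
      have h2 := TruncAux.margXY_nonneg P hP (x i, y i)
      rw [h0] at h1
      linarith
    have hsum1 : ∑ z : Fin n → Z, ∏ i, condZY P (y i) (z i) = 1 := by
      rw [TruncAux.sum_prod_fn (f := fun i c => condZY P (y i) c),
        Finset.prod_congr rfl fun i (_ : i ∈ Finset.univ) => TruncAux.sum_condZY P (hY i)]
      exact Finset.prod_const_one
    show condAccept P C (C.f2 (C.f1 x) y) y + R (x, y) = 1
    simp only [condAccept, hR]
    rw [← hsum1, ← Finset.sum_add_distrib]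
    apply Finset.sum_congr rfl; intro z _
    cases hgz : C.g2 (C.f2 (C.f1 x) y) z <;> simp [hgz]
  -- bound B2
  have B2 : ∑ p : (Fin n → X) × (Fin n → Y),
      (if ¬ (C.g1 (C.f1 p.1) p.2 = true) then prodXY P p else 0) ≤ ε1 := by
    have heq : ∑ p : (Fin n → X) × (Fin n → Y),
        (if ¬ (C.g1 (C.f1 p.1) p.2 = true) then prodXY P p else 0)
        = ∑ p : (Fin n → X) × (Fin n → Y),
          (if C.g1 (C.f1 p.1) p.2 = false then prodXY P p else 0) := by
      apply Finset.sum_congr rfl; intro p _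
      by_cases hc : C.g1 (C.f1 p.1) p.2 = false
      · rw [if_pos hc, if_pos (by simp [hc])]
      · rw [if_neg hc, if_neg (by simp [Bool.not_eq_true] at hc ⊢; exact hc)]
    rw [heq, hbeta]; exact hb1
  -- bound B1 (Markov)
  have hden : (0:ℝ) < 1 + 3*ε2 - ε1 := by
    have := hε1.2; have := hε2.1; linarith
  have hmark : (4*ε2/(1+3*ε2-ε1)) *
      (∑ p : (Fin n → X) × (Fin n → Y),
        (if ¬ ((1 - ε1 - ε2) / (1 + 3 * ε2 - ε1)
            ≤ condAccept P C (C.f2 (C.f1 p.1) p.2) p.2) then prodXY P p else 0)) ≤ ε2 := by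
    rw [Finset.mul_sum]
    refine le_trans (Finset.sum_le_sum ?_) (le_trans (le_of_eq heta) he1)
    intro p _
    by_cases hc : (1 - ε1 - ε2) / (1 + 3 * ε2 - ε1)
        ≤ condAccept P C (C.f2 (C.f1 p.1) p.2) p.2
    · rw [if_neg (not_not_intro hc), mul_zero]
      exact mul_nonneg (hw0 p) (hR0 p)
    · rw [if_pos hc]
      by_cases hwp : prodXY P p = 0
      · rw [hwp, mul_zero, zero_mul]
      · have hARp := hAR p hwp
        have hAlt : condAccept P C (C.f2 (C.f1 p.1) p.2) p.2
            < (1 - ε1 - ε2)/(1 + 3*ε2 - ε1) := lt_of_not_ge hc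
        have hfrac : 4*ε2/(1+3*ε2-ε1) = 1 - (1-ε1-ε2)/(1+3*ε2-ε1) := by
          rw [eq_sub_iff_add_eq, ← add_div, div_eq_one_iff_eq hden.ne']
          ring
        have hRge : 4*ε2/(1+3*ε2-ε1) ≤ R p := by rw [hfrac]; linarith
        calc (4*ε2/(1+3*ε2-ε1)) * prodXY P p ≤ R p * prodXY P p :=
            mul_le_mul_of_nonneg_right hRge (hw0 p)
          _ = prodXY P p * R p := mul_comm _ _
  have B1 : ∑ p : (Fin n → X) × (Fin n → Y),
      (if ¬ ((1 - ε1 - ε2) / (1 + 3 * ε2 - ε1)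
          ≤ condAccept P C (C.f2 (C.f1 p.1) p.2) p.2) then prodXY P p else 0)
      ≤ (1 + 3*ε2 - ε1)/4 := by
    set T1 := ∑ p : (Fin n → X) × (Fin n → Y),
      (if ¬ ((1 - ε1 - ε2) / (1 + 3 * ε2 - ε1)
          ≤ condAccept P C (C.f2 (C.f1 p.1) p.2) p.2) then prodXY P p else 0) with hT1
    have hkey : 4*ε2*T1 ≤ ε2 * (1+3*ε2-ε1) := by
      rw [div_mul_eq_mul_div, div_le_iff₀ hden] at hmark
      linarith
    nlinarith [hε2.1]
  -- bound B3 (empirical distribution)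
  have B3 : ∑ p : (Fin n → X) × (Fin n → Y),
      (if ¬ (∀ a : Y, |empDist p.2 a - margY P a| ≤ θ * margY P a)
        then prodXY P p else 0) ≤ (1 - ε1 - ε2)/4 := by
    have hT3y : ∑ p : (Fin n → X) × (Fin n → Y),
        (if ¬ (∀ a : Y, |empDist p.2 a - margY P a| ≤ θ * margY P a)
          then prodXY P p else 0)
        = ∑ y : Fin n → Y,
          (if ¬ (∀ a : Y, |empDist y a - margY P a| ≤ θ * margY P a)
            then ∏ i, margY P (y i) else 0) := by
      rw [Fintype.sum_prod_type, Finset.sum_comm]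
      apply Finset.sum_congr rfl; intro y _
      by_cases hc : ∀ a : Y, |empDist y a - margY P a| ≤ θ * margY P a
      · rw [if_neg (not_not_intro hc)]
        exact Finset.sum_eq_zero fun x _ => if_neg (not_not_intro hc)
      · rw [if_pos hc,
          Finset.sum_congr rfl fun x (_ : x ∈ Finset.univ) => if_pos hc]
        show ∑ x : Fin n → X, ∏ i, margXY P (x i, y i) = ∏ i, margY P (y i)
        rw [TruncAux.sum_prod_fn (f := fun i b => margXY P (b, y i))]
        exact Finset.prod_congr rfl fun i _ => TruncAux.sum_margXY_fst P (y i)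
    have hT3a : ∑ y : Fin n → Y,
        (if ¬ (∀ a : Y, |empDist y a - margY P a| ≤ θ * margY P a)
          then ∏ i, margY P (y i) else 0)
        ≤ ∑ a : Y, ∑ y : Fin n → Y,
            (if ¬ (|empDist y a - margY P a| ≤ θ * margY P a)
              then ∏ i, margY P (y i) else 0) := by
      rw [Finset.sum_comm]
      apply Finset.sum_le_sum; intro y _
      have hnn : ∀ a : Y, 0 ≤ (if ¬ (|empDist y a - margY P a| ≤ θ * margY P a)
          then ∏ i, margY P (y i) else 0) := by
        intro a
        split
        · exact Finset.prod_nonneg fun i _ => hQ0 _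
        · exact le_rfl
      by_cases hc : ∀ a : Y, |empDist y a - margY P a| ≤ θ * margY P a
      · rw [if_neg (not_not_intro hc)]
        exact Finset.sum_nonneg fun a _ => hnn a
      · rw [if_pos hc]
        push_neg at hc
        obtain ⟨a0, ha0⟩ := hc
        calc ∏ i, margY P (y i)
            = (if ¬ (|empDist y a0 - margY P a0| ≤ θ * margY P a0)
                then ∏ i, margY P (y i) else 0) := (if_pos (not_le.2 ha0)).symm
          _ ≤ ∑ a : Y, (if ¬ (|empDist y a - margY P a| ≤ θ * margY P a)
                then ∏ i, margY P (y i) else 0) :=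
            Finset.single_le_sum (fun a _ => hnn a) (Finset.mem_univ a0)
    have hper : ∀ a : Y, ∑ y : Fin n → Y,
        (if ¬ (|empDist y a - margY P a| ≤ θ * margY P a)
          then ∏ i, margY P (y i) else 0)
        ≤ (1 - ε1 - ε2)/(4*(Fintype.card Y : ℝ)) := by
      intro a
      by_cases hQa : margY P a = 0
      · have hz : ∑ y : Fin n → Y,
            (if ¬ (|empDist y a - margY P a| ≤ θ * margY P a)
              then ∏ i, margY P (y i) else 0) = 0 := by
          apply Finset.sum_eq_zero
          intro y _
          by_cases hcc : |empDist y a - margY P a| ≤ θ * margY P a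
          · exact if_neg (not_not_intro hcc)
          · rw [if_pos hcc]
            have hne : empDist y a ≠ 0 := by
              intro h0
              apply hcc
              rw [hQa, h0]
              simp
            have hcard : (Finset.univ.filter fun i => y i = a).card ≠ 0 := by
              intro h0
              apply hne
              rw [empDist, h0]
              simp
            obtain ⟨i, hi⟩ := Finset.card_ne_zero.1 hcard
            have hyi : y i = a := (Finset.mem_filter.1 hi).2
            exact Finset.prod_eq_zero (Finset.mem_univ i) (by rw [hyi, hQa])
        rw [hz]
        positivity
      · have hQaPos : 0 < margY P a := lt_of_le_of_ne (hQ0 a) (Ne.symm hQa)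
        have hμle : μ⁻¹ ≤ margY P a := hlb ⟨a, hQaPos, rfl⟩
        calc ∑ y : Fin n → Y,
            (if ¬ (|empDist y a - margY P a| ≤ θ * margY P a)
              then ∏ i, margY P (y i) else 0)
            ≤ 2 * Real.exp (-((n:ℝ) * margY P a * θ^2)/3) :=
              TruncAux.chernoff hn1 (margY P) hQ0 hQ1 a hθ0 hθ1
          _ ≤ 2 * Real.exp (-L) := by
              have hnθ : (n:ℝ) * θ^2 = 3*μ*L := by
                rw [hθsq]
                field_simp
              have h1 : (n:ℝ) * θ^2 * μ⁻¹ ≤ (n:ℝ) * margY P a * θ^2 := by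
                have h0 : 0 ≤ (n:ℝ) * θ^2 := by positivity
                calc (n:ℝ) * θ^2 * μ⁻¹ ≤ (n:ℝ) * θ^2 * margY P a := by
                      exact mul_le_mul_of_nonneg_left hμle h0
                  _ = (n:ℝ) * margY P a * θ^2 := by ring
              have h2 : (n:ℝ) * θ^2 * μ⁻¹ = 3*L := by
                rw [hnθ]
                field_simp
              have harg : -((n:ℝ) * margY P a * θ^2)/3 ≤ -L := by linarith
              exact mul_le_mul_of_nonneg_left (Real.exp_le_exp.2 harg) (by norm_num)
          _ = (1 - ε1 - ε2)/(4*(Fintype.card Y : ℝ)) := by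
              rw [hLdef, Real.exp_neg,
                Real.exp_log (div_pos (by positivity) hδ), inv_div]
              have hcY' : (Fintype.card Y : ℝ) ≠ 0 := ne_of_gt hcY
              field_simp
              ring
    calc ∑ p : (Fin n → X) × (Fin n → Y),
        (if ¬ (∀ a : Y, |empDist p.2 a - margY P a| ≤ θ * margY P a)
          then prodXY P p else 0)
        = ∑ y : Fin n → Y,
          (if ¬ (∀ a : Y, |empDist y a - margY P a| ≤ θ * margY P a)
            then ∏ i, margY P (y i) else 0) := hT3y
      _ ≤ ∑ a : Y, ∑ y : Fin n → Y,
            (if ¬ (|empDist y a - margY P a| ≤ θ * margY P a)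
              then ∏ i, margY P (y i) else 0) := hT3a
      _ ≤ ∑ _a : Y, (1 - ε1 - ε2)/(4*(Fintype.card Y : ℝ)) :=
            Finset.sum_le_sum fun a _ => hper a
      _ = (1 - ε1 - ε2)/4 := by
            rw [Finset.sum_const, Finset.card_univ, nsmul_eq_mul]
            field_simp
  -- pointwise union bound
  have key : ∀ p : (Fin n → X) × (Fin n → Y),
      prodXY P p
        - ((if ¬ ((1 - ε1 - ε2) / (1 + 3 * ε2 - ε1)
              ≤ condAccept P C (C.f2 (C.f1 p.1) p.2) p.2) then prodXY P p else 0)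
          + (if ¬ (C.g1 (C.f1 p.1) p.2 = true) then prodXY P p else 0)
          + (if ¬ (∀ a : Y, |empDist p.2 a - margY P a| ≤ θ * margY P a)
              then prodXY P p else 0))
      ≤ (if ((1 - ε1 - ε2) / (1 + 3 * ε2 - ε1)
                ≤ condAccept P C (C.f2 (C.f1 p.1) p.2) p.2) ∧
              C.g1 (C.f1 p.1) p.2 = true ∧
              (∀ a : Y, |empDist p.2 a - margY P a| ≤ θ * margY P a) then
            prodXY P p
          else 0) := by
    intro p
    have hwp := hw0 p
    by_cases h1 : (1 - ε1 - ε2) / (1 + 3 * ε2 - ε1)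
        ≤ condAccept P C (C.f2 (C.f1 p.1) p.2) p.2 <;>
      by_cases h2 : C.g1 (C.f1 p.1) p.2 = true <;>
        by_cases h3 : ∀ a : Y, |empDist p.2 a - margY P a| ≤ θ * margY P a <;>
          simp [h1, h2, h3] <;> linarith
  have hsum_le : ∑ p : (Fin n → X) × (Fin n → Y),
      (prodXY P p
        - ((if ¬ ((1 - ε1 - ε2) / (1 + 3 * ε2 - ε1)
              ≤ condAccept P C (C.f2 (C.f1 p.1) p.2) p.2) then prodXY P p else 0)
          + (if ¬ (C.g1 (C.f1 p.1) p.2 = true) then prodXY P p else 0)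
          + (if ¬ (∀ a : Y, |empDist p.2 a - margY P a| ≤ θ * margY P a)
              then prodXY P p else 0)))
      ≤ ∑ p : (Fin n → X) × (Fin n → Y),
          (if ((1 - ε1 - ε2) / (1 + 3 * ε2 - ε1)
                ≤ condAccept P C (C.f2 (C.f1 p.1) p.2) p.2) ∧
              C.g1 (C.f1 p.1) p.2 = true ∧
              (∀ a : Y, |empDist p.2 a - margY P a| ≤ θ * margY P a) then
            prodXY P p
          else 0) := Finset.sum_le_sum fun p _ => key p
  have hsplit : ∑ p : (Fin n → X) × (Fin n → Y),
      (prodXY P p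
        - ((if ¬ ((1 - ε1 - ε2) / (1 + 3 * ε2 - ε1)
              ≤ condAccept P C (C.f2 (C.f1 p.1) p.2) p.2) then prodXY P p else 0)
          + (if ¬ (C.g1 (C.f1 p.1) p.2 = true) then prodXY P p else 0)
          + (if ¬ (∀ a : Y, |empDist p.2 a - margY P a| ≤ θ * margY P a)
              then prodXY P p else 0)))
      = 1
        - ((∑ p : (Fin n → X) × (Fin n → Y),
            (if ¬ ((1 - ε1 - ε2) / (1 + 3 * ε2 - ε1)
              ≤ condAccept P C (C.f2 (C.f1 p.1) p.2) p.2) then prodXY P p else 0))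
          + (∑ p : (Fin n → X) × (Fin n → Y),
            (if ¬ (C.g1 (C.f1 p.1) p.2 = true) then prodXY P p else 0))
          + (∑ p : (Fin n → X) × (Fin n → Y),
            (if ¬ (∀ a : Y, |empDist p.2 a - margY P a| ≤ θ * margY P a)
              then prodXY P p else 0))) := by
    rw [Finset.sum_sub_distrib, hw1, Finset.sum_add_distrib, Finset.sum_add_distrib]
  linarith [hsum_le, hsplit, B1, B2, B3]


end
end

section
/- Let Y be a finite nonempty set, let P_Y be a pmf on Y, let μ := (min_{y : P_Y(y)>0} P_Y(y))^{-1}, let ε ∈ (0,1), and for n ∈ ℕ let θ_n := √((3μ/n)·log(8|Y|/ε)). Then for every n such that θ_n ≤ 1, the n-fold i.i.d. product P_Y^n satisfies P_Y^n( { y^n ∈ Y^n : |P̂_{y^n}(y) − P_Y(y)| ≤ θ_n·P_Y(y) for all y ∈ Y } ) ≥ 1 − ε/4, where P̂_{y^n}(y) := (1/n)·|{i : y_i = y}| is the empirical distribution of y^n. -/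
open scoped BigOperators Classical

theorem exp_le_quadratic {x : ℝ} (hx : |x| ≤ 1) : Real.exp x ≤ 1 + x + 3/4 * x^2 := by
  have h := Real.exp_bound hx (by norm_num : 0 < 2)
  simp [Finset.sum_range_succ] at h
  have h2 := (abs_le.mp h).2
  nlinarith [sq_abs x]

theorem sum_prod_pow {Y : Type} [Fintype Y] (n : ℕ) (f : Y → ℝ) :
    ∑ y : Fin n → Y, ∏ i, f (y i) = (∑ b, f b)^n := by
  classical
  have : (∑ b, f b)^n = ∏ _i : Fin n, (∑ b, f b) := by simp
  rw [this, Finset.prod_univ_sum]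
  simp

theorem mgf_eq {Y : Type} [Fintype Y] (PY : Y → ℝ) (hsum : ∑ b, PY b = 1)
    (n : ℕ) (a : Y) (s : ℝ) :
    ∑ y : Fin n → Y, (∏ i, PY (y i)) *
        Real.exp (s * ((Finset.univ.filter fun i => y i = a).card : ℝ))
      = (1 + PY a * (Real.exp s - 1))^n := by
  classical
  have key : ∀ y : Fin n → Y,
      (∏ i, PY (y i)) * Real.exp (s * ((Finset.univ.filter fun i => y i = a).card : ℝ))
      = ∏ i, (PY (y i) * (if y i = a then Real.exp s else 1)) := by
    intro y
    rw [Finset.prod_mul_distrib]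
    congr 1
    rw [Finset.card_filter]
    push_cast
    rw [Finset.mul_sum, Real.exp_sum]
    apply Finset.prod_congr rfl
    intro i _
    split_ifs <;> simp
  calc ∑ y : Fin n → Y, (∏ i, PY (y i)) *
        Real.exp (s * ((Finset.univ.filter fun i => y i = a).card : ℝ))
      = ∑ y : Fin n → Y, ∏ i, (PY (y i) * (if y i = a then Real.exp s else 1)) := by
        exact Finset.sum_congr rfl fun y _ => key y
    _ = (∑ b, PY b * (if b = a then Real.exp s else 1))^n :=
        sum_prod_pow n (fun b => PY b * (if b = a then Real.exp s else 1))
    _ = (1 + PY a * (Real.exp s - 1))^n := by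
        congr 1
        have h2 : ∀ b, PY b * (if b = a then Real.exp s else 1)
            = PY b + (if b = a then PY b * (Real.exp s - 1) else 0) := by
          intro b; split_ifs <;> ring
        simp_rw [h2, Finset.sum_add_distrib, hsum]
        rw [Finset.sum_ite_eq' Finset.univ a (fun b => PY b * (Real.exp s - 1))]
        simp

theorem chernoff_tail {Y : Type} [Fintype Y] (PY : Y → ℝ)
    (h0 : ∀ b, 0 ≤ PY b) (hsum : ∑ b, PY b = 1)
    (n : ℕ) (a : Y) (hp1 : PY a ≤ 1) (t c : ℝ) (ht : |t| ≤ 1) :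
    ∑ y : Fin n → Y,
        (if c ≤ t * ((Finset.univ.filter fun i => y i = a).card : ℝ) then ∏ i, PY (y i) else 0)
      ≤ Real.exp ((n : ℝ) * (PY a * (t + 3/4 * t^2)) - c) := by
  classical
  have hW : ∀ y : Fin n → Y, 0 ≤ ∏ i, PY (y i) := fun y => Finset.prod_nonneg fun i _ => h0 _
  have step : ∀ y : Fin n → Y,
      (if c ≤ t * ((Finset.univ.filter fun i => y i = a).card : ℝ) then ∏ i, PY (y i) else 0)
      ≤ (∏ i, PY (y i)) * Real.exp (t * ((Finset.univ.filter fun i => y i = a).card : ℝ) - c) := by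
    intro y
    split_ifs with h
    · nth_rewrite 1 [← mul_one (∏ i, PY (y i))]
      exact mul_le_mul_of_nonneg_left (Real.one_le_exp (by linarith)) (hW y)
    · exact mul_nonneg (hW y) (Real.exp_pos _).le
  calc ∑ y : Fin n → Y,
        (if c ≤ t * ((Finset.univ.filter fun i => y i = a).card : ℝ) then ∏ i, PY (y i) else 0)
      ≤ ∑ y : Fin n → Y, (∏ i, PY (y i)) *
          Real.exp (t * ((Finset.univ.filter fun i => y i = a).card : ℝ) - c) :=
        Finset.sum_le_sum fun y _ => step y
    _ = Real.exp (-c) * ∑ y : Fin n → Y, (∏ i, PY (y i)) *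
          Real.exp (t * ((Finset.univ.filter fun i => y i = a).card : ℝ)) := by
        rw [Finset.mul_sum]
        apply Finset.sum_congr rfl
        intro y _
        rw [sub_eq_add_neg, Real.exp_add]
        ring
    _ = Real.exp (-c) * (1 + PY a * (Real.exp t - 1))^n := by rw [mgf_eq PY hsum n a t]
    _ ≤ Real.exp (-c) * (Real.exp (PY a * (t + 3/4 * t^2)))^n := by
        apply mul_le_mul_of_nonneg_left _ (Real.exp_pos _).le
        apply pow_le_pow_left₀
        · nlinarith [Real.exp_pos t, h0 a]
        · have hq := exp_le_quadratic ht
          have he := Real.add_one_le_exp (PY a * (t + 3/4 * t^2))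
          nlinarith [h0 a]
    _ = Real.exp ((n : ℝ) * (PY a * (t + 3/4 * t^2)) - c) := by
        rw [← Real.exp_nat_mul, ← Real.exp_add]
        ring_nf

set_option maxHeartbeats 1000000 in
/-- **Chernoff bound for the typical set.** With
`θ_n = √((3μ/n)·log(8|Y|/ε))` and `μ = (min_{P_Y(y)>0} P_Y(y))⁻¹`, for every
`n ≥ 1` with `θ_n ≤ 1` the typical set has `P_Y^n`-probability at least
`1 − ε/4`.  (The restriction `n ≥ 1` reflects that `θ_n` is only defined for
positive `n`.) -/
theorem typical_set_probability
    (Y : Type) [Fintype Y] [Nonempty Y]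
    (PY : Y → ℝ) (hPY : IsPMF PY)
    (μ : ℝ) (hμ : IsLeast {r : ℝ | ∃ y, 0 < PY y ∧ PY y = r} μ⁻¹)
    (ε : ℝ) (hε : ε ∈ Set.Ioo (0 : ℝ) 1)
    (n : ℕ) (hn : 0 < n)
    (hθ : Real.sqrt ((3 * μ / n) * Real.log (8 * (Fintype.card Y : ℝ) / ε)) ≤ 1) :
    1 - ε / 4 ≤
      ∑ y : Fin n → Y,
        if (∀ a : Y, |empDist y a - PY a| ≤
            Real.sqrt ((3 * μ / n) * Real.log (8 * (Fintype.card Y : ℝ) / ε))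
              * PY a) then
          ∏ i, PY (y i)
        else 0 := by
  classical
  obtain ⟨hp0, hsum⟩ := hPY
  obtain ⟨⟨y0, hy0pos, hy0eq⟩, hlb⟩ := hμ
  obtain ⟨hεpos, hε1⟩ := hε
  set L : ℝ := Real.log (8 * (Fintype.card Y : ℝ) / ε) with hLdef
  set θ : ℝ := Real.sqrt ((3 * μ / n) * L) with hθdef
  have hμinv_pos : 0 < μ⁻¹ := hy0eq ▸ hy0pos
  have hμpos : 0 < μ := inv_pos.mp hμinv_pos
  have hcard1 : (1 : ℝ) ≤ Fintype.card Y := by exact_mod_cast Fintype.card_pos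
  have hcardpos : (0 : ℝ) < Fintype.card Y := by linarith
  have hratio : (1 : ℝ) < 8 * (Fintype.card Y : ℝ) / ε := by
    rw [lt_div_iff₀ hεpos]; nlinarith
  have hLpos : 0 < L := Real.log_pos hratio
  have hnpos : (0 : ℝ) < n := by exact_mod_cast hn
  have harg : 0 ≤ (3 * μ / n) * L := by positivity
  have hθ0 : 0 ≤ θ := Real.sqrt_nonneg _
  have hθsq : θ ^ 2 = (3 * μ / n) * L := Real.sq_sqrt harg
  have hp1 : ∀ a, PY a ≤ 1 := by
    intro a
    rw [← hsum]
    exact Finset.single_le_sum (fun b _ => hp0 b) (Finset.mem_univ a)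
  have hW : ∀ y : Fin n → Y, 0 ≤ ∏ i, PY (y i) := fun y => Finset.prod_nonneg fun i _ => hp0 _
  have htot : ∑ y : Fin n → Y, ∏ i, PY (y i) = 1 := by
    rw [sum_prod_pow n PY, hsum, one_pow]
  -- exp(-L) value
  have hexpL : Real.exp (-L) = ε / (8 * (Fintype.card Y : ℝ)) := by
    rw [Real.exp_neg, hLdef, Real.exp_log (by positivity), inv_div]
  -- per-letter tail bound
  have hper : ∀ a : Y,
      ∑ y : Fin n → Y, (if θ * PY a < |empDist y a - PY a| then ∏ i, PY (y i) else 0)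
        ≤ ε / (4 * (Fintype.card Y : ℝ)) := by
    intro a
    by_cases hpa : PY a = 0
    · have : ∀ y : Fin n → Y,
          (if θ * PY a < |empDist y a - PY a| then ∏ i, PY (y i) else 0) = 0 := by
        intro y
        split_ifs with h
        · rw [hpa, mul_zero, sub_zero] at h
          have hne : empDist y a ≠ 0 := by
            intro h0; rw [h0, abs_zero] at h; exact lt_irrefl _ h
          have hcard_ne : ((Finset.univ.filter fun i => y i = a).card : ℝ) ≠ 0 := by
            intro h0
            apply hne
            rw [empDist, h0, zero_div]
          have : (Finset.univ.filter fun i => y i = a).Nonempty := by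
            rw [Finset.nonempty_iff_ne_empty]
            intro hemp
            apply hcard_ne
            rw [hemp]; simp
          obtain ⟨i, hi⟩ := this
          have hyi : y i = a := (Finset.mem_filter.mp hi).2
          exact Finset.prod_eq_zero (Finset.mem_univ i) (by rw [hyi, hpa])
        · rfl
      rw [Finset.sum_congr rfl fun y _ => this y]
      simp
      positivity
    · have hpa' : 0 < PY a := lt_of_le_of_ne (hp0 a) (Ne.symm hpa)
      have hμp : 1 ≤ μ * PY a := by
        have hle : μ⁻¹ ≤ PY a := hlb ⟨a, hpa', rfl⟩
        calc (1 : ℝ) = μ * μ⁻¹ := (mul_inv_cancel₀ (ne_of_gt hμpos)).symm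
          _ ≤ μ * PY a := mul_le_mul_of_nonneg_left hle hμpos.le
      set p : ℝ := PY a with hpdef
      set s : ℝ := 2 * θ / 3 with hsdef
      have hs0 : 0 ≤ s := by positivity
      have hs1 : |s| ≤ 1 := by rw [abs_of_nonneg hs0]; rw [hsdef]; linarith
      have hns1 : |(-s)| ≤ 1 := by rw [abs_neg]; exact hs1
      set c₁ : ℝ := s * ((n : ℝ) * (p * (1 + θ))) with hc1def
      set c₂ : ℝ := -s * ((n : ℝ) * (p * (1 - θ))) with hc2def
      -- pointwise indicator bound
      have hpoint : ∀ y : Fin n → Y,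
          (if θ * p < |empDist y a - p| then ∏ i, PY (y i) else 0)
          ≤ (if c₁ ≤ s * ((Finset.univ.filter fun i => y i = a).card : ℝ)
              then ∏ i, PY (y i) else 0)
            + (if c₂ ≤ -s * ((Finset.univ.filter fun i => y i = a).card : ℝ)
              then ∏ i, PY (y i) else 0) := by
        intro y
        have hX : empDist y a = ((Finset.univ.filter fun i => y i = a).card : ℝ) / n := rfl
        set X : ℝ := ((Finset.univ.filter fun i => y i = a).card : ℝ) with hXdef
        have t1 : (0:ℝ) ≤ (if c₁ ≤ s * X then ∏ i, PY (y i) else 0) := by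
          split_ifs; exacts [hW y, le_refl 0]
        have t2 : (0:ℝ) ≤ (if c₂ ≤ -s * X then ∏ i, PY (y i) else 0) := by
          split_ifs; exacts [hW y, le_refl 0]
        by_cases h : θ * p < |empDist y a - p|
        · rw [if_pos h]
          rcases lt_abs.mp h with h' | h'
          · -- upper tail: emp - p > θp
            have hXgt : (n : ℝ) * (p * (1 + θ)) < X := by
              have h2 : p * (1 + θ) < X / n := by rw [hX] at h'; ring_nf; ring_nf at h'; linarith [h']
              calc (n : ℝ) * (p * (1 + θ)) < n * (X / n) :=
                    (mul_lt_mul_iff_right₀ hnpos).mpr h2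
                _ = X := by field_simp
            have hcle : c₁ ≤ s * X := by
              rw [hc1def]
              exact mul_le_mul_of_nonneg_left hXgt.le hs0
            rw [if_pos hcle]
            linarith
          · -- lower tail: p - emp > θp
            have hXlt : X < (n : ℝ) * (p * (1 - θ)) := by
              have h2 : X / n < p * (1 - θ) := by rw [hX] at h'; ring_nf; ring_nf at h'; linarith [h']
              calc X = n * (X / n) := by field_simp
                _ < n * (p * (1 - θ)) := (mul_lt_mul_iff_right₀ hnpos).mpr h2
            have hcle : c₂ ≤ -s * X := by
              rw [hc2def]
              have h3 := mul_le_mul_of_nonneg_left hXlt.le hs0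
              linarith [h3]
            rw [if_pos hcle]
            linarith
        · rw [if_neg h]
          linarith
      -- the two chernoff bounds
      have hb1 := chernoff_tail PY hp0 hsum n a (hp1 a) s c₁ hs1
      have hb2 := chernoff_tail PY hp0 hsum n a (hp1 a) (-s) c₂ hns1
      -- exponent values
      have hexp1 : (n : ℝ) * (p * (s + 3/4 * s^2)) - c₁ = -((n:ℝ) * p * θ^2 / 3) := by
        rw [hc1def, hsdef]; ring
      have hexp2 : (n : ℝ) * (p * (-s + 3/4 * (-s)^2)) - c₂ = -((n:ℝ) * p * θ^2 / 3) := by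
        rw [hc2def, hsdef]; ring
      have hexpval : (n:ℝ) * p * θ^2 / 3 = p * μ * L := by
        rw [hθsq]; field_simp
      have hexpbound : Real.exp (-((n:ℝ) * p * θ^2 / 3)) ≤ ε / (8 * (Fintype.card Y : ℝ)) := by
        rw [← hexpL]
        apply Real.exp_le_exp.mpr
        rw [hexpval]
        nlinarith
      have hb1' : ∑ y : Fin n → Y,
          (if c₁ ≤ s * ((Finset.univ.filter fun i => y i = a).card : ℝ)
            then ∏ i, PY (y i) else 0) ≤ ε / (8 * (Fintype.card Y : ℝ)) := by
        calc _ ≤ Real.exp ((n : ℝ) * (p * (s + 3/4 * s^2)) - c₁) := hb1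
          _ = Real.exp (-((n:ℝ) * p * θ^2 / 3)) := by rw [hexp1]
          _ ≤ _ := hexpbound
      have hb2' : ∑ y : Fin n → Y,
          (if c₂ ≤ -s * ((Finset.univ.filter fun i => y i = a).card : ℝ)
            then ∏ i, PY (y i) else 0) ≤ ε / (8 * (Fintype.card Y : ℝ)) := by
        calc _ ≤ Real.exp ((n : ℝ) * (p * (-s + 3/4 * (-s)^2)) - c₂) := hb2
          _ = Real.exp (-((n:ℝ) * p * θ^2 / 3)) := by rw [hexp2]
          _ ≤ _ := hexpbound
      calc ∑ y : Fin n → Y, (if θ * p < |empDist y a - p| then ∏ i, PY (y i) else 0)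
          ≤ ∑ y : Fin n → Y,
              ((if c₁ ≤ s * ((Finset.univ.filter fun i => y i = a).card : ℝ)
                then ∏ i, PY (y i) else 0)
              + (if c₂ ≤ -s * ((Finset.univ.filter fun i => y i = a).card : ℝ)
                then ∏ i, PY (y i) else 0)) := Finset.sum_le_sum fun y _ => hpoint y
        _ = (∑ y : Fin n → Y, (if c₁ ≤ s * ((Finset.univ.filter fun i => y i = a).card : ℝ)
                then ∏ i, PY (y i) else 0))
            + ∑ y : Fin n → Y, (if c₂ ≤ -s * ((Finset.univ.filter fun i => y i = a).card : ℝ)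
                then ∏ i, PY (y i) else 0) := Finset.sum_add_distrib
        _ ≤ ε / (8 * (Fintype.card Y : ℝ)) + ε / (8 * (Fintype.card Y : ℝ)) := add_le_add hb1' hb2'
        _ = ε / (4 * (Fintype.card Y : ℝ)) := by field_simp; ring
  -- union bound and complement
  have hbadpt : ∀ y : Fin n → Y,
      (if ¬ (∀ a : Y, |empDist y a - PY a| ≤ θ * PY a) then ∏ i, PY (y i) else 0)
      ≤ ∑ a : Y, (if θ * PY a < |empDist y a - PY a| then ∏ i, PY (y i) else 0) := by
    intro y
    by_cases h : ∀ a : Y, |empDist y a - PY a| ≤ θ * PY a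
    · rw [if_neg (not_not_intro h)]
      apply Finset.sum_nonneg
      intro b _
      split_ifs
      exacts [hW y, le_refl 0]
    · rw [if_pos h]
      push_neg at h
      obtain ⟨a, ha'⟩ := h
      have heq : (∏ i, PY (y i))
          = (if θ * PY a < |empDist y a - PY a| then ∏ i, PY (y i) else 0) := by
        rw [if_pos ha']
      refine le_trans (le_of_eq heq) (Finset.single_le_sum
        (f := fun a => if θ * PY a < |empDist y a - PY a| then ∏ i, PY (y i) else 0)
        ?_ (Finset.mem_univ a))
      intro b _
      split_ifs
      exacts [hW y, le_refl 0]
  have hbad : ∑ y : Fin n → Y,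
      (if ¬ (∀ a : Y, |empDist y a - PY a| ≤ θ * PY a) then ∏ i, PY (y i) else 0) ≤ ε / 4 := by
    calc ∑ y : Fin n → Y,
        (if ¬ (∀ a : Y, |empDist y a - PY a| ≤ θ * PY a) then ∏ i, PY (y i) else 0)
        ≤ ∑ y : Fin n → Y, ∑ a : Y,
            (if θ * PY a < |empDist y a - PY a| then ∏ i, PY (y i) else 0) :=
          Finset.sum_le_sum fun y _ => hbadpt y
      _ = ∑ a : Y, ∑ y : Fin n → Y,
            (if θ * PY a < |empDist y a - PY a| then ∏ i, PY (y i) else 0) := by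
          rw [Finset.sum_comm]
      _ ≤ ∑ _a : Y, ε / (4 * (Fintype.card Y : ℝ)) :=
          Finset.sum_le_sum fun a _ => hper a
      _ = (Fintype.card Y : ℝ) * (ε / (4 * (Fintype.card Y : ℝ))) := by
          rw [Finset.sum_const]; simp [mul_comm]
      _ = ε / 4 := by field_simp
  have hsplit : (∑ y : Fin n → Y,
        if (∀ a : Y, |empDist y a - PY a| ≤ θ * PY a) then ∏ i, PY (y i) else 0)
      + ∑ y : Fin n → Y,
        (if ¬ (∀ a : Y, |empDist y a - PY a| ≤ θ * PY a) then ∏ i, PY (y i) else 0) = 1 := by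
    rw [← Finset.sum_add_distrib, ← htot]
    apply Finset.sum_congr rfl
    intro y _
    split_ifs with h <;> simp
  linarith
end

section
/- Let X be a finite nonempty set, let P be a pmf on X, let n ∈ ℕ, and let P̃ be a pmf on X^n that is absolutely continuous with respect to the n-fold product P^n. Then H(P̃) + D(P̃‖P^n) = Σ_{j=1}^n ( H(P̃_j) + D(P̃_j‖P) ), where P̃_j denotes the j-th coordinate marginal of P̃. -/
open scoped BigOperators Classical

noncomputable section

/-- Shannon entropy of a pmf on a finite set (natural log). -/
def entropy {Ω : Type} [Fintype Ω] (P : Ω → ℝ) : ℝ :=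
  -∑ ω, P ω * Real.log (P ω)

end

lemma cross_entropy_eq {Ω : Type} [Fintype Ω] (R Q : Ω → ℝ)
    (h : ∀ ω, R ω ≠ 0 → Q ω ≠ 0) :
    entropy R + KL R Q = -∑ ω, R ω * Real.log (Q ω) := by
  unfold entropy KL
  rw [neg_add_eq_sub, ← Finset.sum_sub_distrib, ← Finset.sum_neg_distrib]
  apply Finset.sum_congr rfl
  intro ω _
  by_cases hR : R ω = 0
  · simp [hR]
  · rw [Real.log_div hR (h ω hR)]; ring

/-- **Tensorization identity (Tyagi–Watanabe, Prop. 1).**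
For any pmf `P̃` on `Xⁿ` absolutely continuous w.r.t. `Pⁿ`,
`H(P̃) + D(P̃‖Pⁿ) = Σ_j (H(P̃_j) + D(P̃_j‖P))`. -/
theorem entropy_plus_kl_tensorization
    (X : Type) [Fintype X] [Nonempty X]
    (P : X → ℝ) (hP : IsPMF P)
    (n : ℕ)
    (Pt : (Fin n → X) → ℝ) (hPt : IsPMF Pt)
    (hac : ∀ ω : Fin n → X, (∏ i, P (ω i)) = 0 → Pt ω = 0) :
    entropy Pt + KL Pt (fun ω => ∏ i, P (ω i))
      = ∑ j : Fin n,
          (entropy (pushf Pt fun ω => ω j) + KL (pushf Pt fun ω => ω j) P) := by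
  have hmac : ∀ j : Fin n, ∀ x : X, (pushf Pt fun ω => ω j) x ≠ 0 → P x ≠ 0 := by
    intro j x hx hPx
    apply hx
    unfold pushf
    apply Finset.sum_eq_zero
    intro ω _
    by_cases hω : ω j = x
    · simp [hω, hac ω (Finset.prod_eq_zero (Finset.mem_univ j) (hω ▸ hPx))]
    · simp [hω]
  have hPtac : ∀ ω : Fin n → X, Pt ω ≠ 0 → ∀ i, P (ω i) ≠ 0 := by
    intro ω hω i hPi
    exact hω (hac ω (Finset.prod_eq_zero (Finset.mem_univ i) hPi))
  rw [cross_entropy_eq Pt _ (fun ω hω => by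
      rw [Finset.prod_ne_zero_iff]; exact fun i _ => hPtac ω hω i)]
  have : ∀ j : Fin n, entropy (pushf Pt fun ω => ω j) + KL (pushf Pt fun ω => ω j) P
      = -∑ x, (pushf Pt fun ω => ω j) x * Real.log (P x) := fun j =>
    cross_entropy_eq _ _ (hmac j)
  simp only [this]
  rw [Finset.sum_neg_distrib, neg_inj]
  have hlog : ∀ ω : Fin n → X, Pt ω * Real.log (∏ i, P (ω i))
      = ∑ i, Pt ω * Real.log (P (ω i)) := by
    intro ω
    by_cases hω : Pt ω = 0
    · simp [hω]
    · rw [Real.log_prod (fun i _ => hPtac ω hω i), Finset.mul_sum]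
  calc ∑ ω, Pt ω * Real.log (∏ i, P (ω i))
      = ∑ ω, ∑ j, Pt ω * Real.log (P (ω j)) := Finset.sum_congr rfl (fun ω _ => hlog ω)
    _ = ∑ j, ∑ ω : Fin n → X, Pt ω * Real.log (P (ω j)) := Finset.sum_comm
    _ = ∑ j : Fin n, ∑ x, (pushf Pt fun ω => ω j) x * Real.log (P x) := by
        apply Finset.sum_congr rfl
        intro j _
        unfold pushf
        simp only [Finset.sum_mul, ite_mul, zero_mul]
        rw [Finset.sum_comm]
        apply Finset.sum_congr rfl
        intro ω _
        simp
end

section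
/- Let V and Y be finite nonempty sets, let Q be a pmf on V×Y with marginals Q_V, Q_Y, let P_Y be a pmf on Y with P_Y(y) > 0 for all y, let μ := (min_y P_Y(y))^{-1}, and let θ > 0 satisfy |Q_Y(y) − P_Y(y)| ≤ θ·P_Y(y) for all y. Let Ṽ := V ∪ {v*} with v* a new symbol and define the pmf P' on Ṽ×Y by P'(v,y) := Q(v,y)/(1+θ) for v ∈ V and P'(v*,y) := ((1+θ)·P_Y(y) − Q_Y(y))/(1+θ) (these values are nonnegative and sum to 1). Then: (i) the Y-marginal of P' equals P_Y; and (ii) I_{P'}(Ṽ;Y) ≤ (1/(1+θ))·( I_Q(V;Y) + D(Q_Y‖P_Y) ) + (θ/(1+θ))·log μ. -/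
open scoped BigOperators Classical

section auxESC
variable {V Y : Type} [Fintype V] [Fintype Y]

lemma pushf_snd_eq (P : V × Y → ℝ) (y : Y) :
    pushf P Prod.snd y = ∑ v, P (v, y) := by
  unfold pushf
  rw [Fintype.sum_prod_type]
  refine Finset.sum_congr rfl fun v _ => ?_
  simp

lemma pushf_fst_eq (P : V × Y → ℝ) (v : V) :
    pushf P Prod.fst v = ∑ y, P (v, y) := by
  unfold pushf
  rw [Fintype.sum_prod_type, Finset.sum_comm]
  refine Finset.sum_congr rfl fun y _ => ?_
  simp

lemma pushf_pair_eq (P : V × Y → ℝ) (p : V × Y) :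
    pushf P (fun ω => (ω.1, ω.2)) p = P p := by
  unfold pushf
  simp

lemma MIof_prod_eq (P : V × Y → ℝ) :
    MIof P Prod.fst Prod.snd
      = ∑ v, ∑ y, P (v, y) *
          Real.log (P (v, y) / (pushf P Prod.fst v * pushf P Prod.snd y)) := by
  unfold MIof KL
  rw [Fintype.sum_prod_type]
  refine Finset.sum_congr rfl fun v _ => Finset.sum_congr rfl fun y _ => ?_
  rw [pushf_pair_eq P (v, y)]

end auxESC

/-- **Adding an extra symbol to fix the `Y`-marginal (Lemma 6, part 1).**
Define `P'` on `(V ∪ {v*}) × Y` (with `v* = none`) by `P'(v,y) = Q(v,y)/(1+θ)`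
and `P'(v*,y) = ((1+θ)P_Y(y) − Q_Y(y))/(1+θ)`. Then `P'` is a pmf whose
`Y`-marginal is `P_Y`, and
`I_{P'}(Ṽ;Y) ≤ (1/(1+θ))·(I_Q(V;Y) + D(Q_Y‖P_Y)) + (θ/(1+θ))·log μ`. -/
theorem extra_symbol_construction
    (V Y : Type) [Fintype V] [Fintype Y] [Nonempty V] [Nonempty Y]
    (Q : V × Y → ℝ) (hQ : IsPMF Q)
    (PY : Y → ℝ) (hPY : IsPMF PY) (hPYpos : ∀ y, 0 < PY y)
    (μ : ℝ) (hμ : IsLeast (Set.range PY) μ⁻¹)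
    (θ : ℝ) (hθ : 0 < θ)
    (hclose : ∀ y, |pushf Q Prod.snd y - PY y| ≤ θ * PY y)
    (P' : Option V × Y → ℝ)
    (hP'some : ∀ (v : V) (y : Y), P' (some v, y) = Q (v, y) / (1 + θ))
    (hP'none : ∀ y : Y,
      P' (none, y) = ((1 + θ) * PY y - pushf Q Prod.snd y) / (1 + θ)) :
    IsPMF P' ∧
    (∀ y, pushf P' Prod.snd y = PY y) ∧
    MIof P' Prod.fst Prod.snd
      ≤ (1 / (1 + θ)) * (MIof Q Prod.fst Prod.snd + KL (pushf Q Prod.snd) PY)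
        + (θ / (1 + θ)) * Real.log μ := by
  set QY : Y → ℝ := pushf Q Prod.snd with hQYdef
  set QV : V → ℝ := pushf Q Prod.fst with hQVdef
  have h1θ : (0:ℝ) < 1 + θ := by linarith
  have h1θ' : (1:ℝ) + θ ≠ 0 := ne_of_gt h1θ
  -- basic facts about QY, QV
  have hQYs : ∀ y, QY y = ∑ v, Q (v, y) := fun y => pushf_snd_eq Q y
  have hQVs : ∀ v, QV v = ∑ y, Q (v, y) := fun v => pushf_fst_eq Q v
  have hQYnn : ∀ y, 0 ≤ QY y := fun y => by
    rw [hQYs]; exact Finset.sum_nonneg fun v _ => hQ.1 (v, y)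
  have hQsum : ∑ v, ∑ y, Q (v, y) = 1 := by
    rw [← Fintype.sum_prod_type]; exact hQ.2
  have hQYsum : ∑ y, QY y = 1 := by
    simp_rw [hQYs]; rw [Finset.sum_comm]; exact hQsum
  have hQYle : ∀ y, QY y ≤ (1 + θ) * PY y := fun y => by
    have := (abs_le.mp (hclose y)).2
    linarith
  -- μ facts
  have hμinvpos : 0 < μ⁻¹ := by
    obtain ⟨y0, hy0⟩ := hμ.1
    rw [← hy0]; exact hPYpos y0
  have hμpos : 0 < μ := by
    have := inv_pos.mp hμinvpos; exact this
  have hPYge : ∀ y, μ⁻¹ ≤ PY y := fun y => hμ.2 ⟨y, rfl⟩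
  -- nonnegativity of P'
  have hP'nn : ∀ p, 0 ≤ P' p := by
    rintro ⟨o | v, y⟩
    · rw [hP'none]
      have := hQYle y
      apply div_nonneg <;> linarith
    · rw [hP'some]
      have := hQ.1 (v, y)
      positivity
  -- marginals of P'
  have hmarg : ∀ y, pushf P' Prod.snd y = PY y := by
    intro y
    rw [pushf_snd_eq]
    rw [Fintype.sum_option]
    simp_rw [hP'none, hP'some]
    rw [← Finset.sum_div, ← hQYs y]
    field_simp
    ring
  have hP'V_some : ∀ v, pushf P' Prod.fst (some v) = QV v / (1 + θ) := by
    intro v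
    rw [pushf_fst_eq]
    simp_rw [hP'some]
    rw [← Finset.sum_div, ← hQVs v]
  have hP'V_none : pushf P' Prod.fst none = θ / (1 + θ) := by
    rw [pushf_fst_eq]
    simp_rw [hP'none]
    rw [← Finset.sum_div, Finset.sum_sub_distrib, ← Finset.mul_sum, hPY.2, hQYsum]
    ring_nf
  have hP'sum : ∑ p, P' p = 1 := by
    rw [Fintype.sum_prod_type, Finset.sum_comm]
    calc ∑ y, ∑ o, P' (o, y) = ∑ y, pushf P' Prod.snd y := by
          refine Finset.sum_congr rfl fun y _ => ?_
          rw [pushf_snd_eq]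
        _ = 1 := by simp_rw [hmarg]; exact hPY.2
  refine ⟨⟨hP'nn, hP'sum⟩, hmarg, ?_⟩
  -- Mutual information bound
  rw [MIof_prod_eq P']
  rw [Fintype.sum_option]
  -- the "none" part
  set c : ℝ := θ / (1 + θ) with hc
  have hcpos : 0 < c := div_pos hθ h1θ
  have hasum : ∑ y, P' (none, y) = c := by
    simp_rw [hP'none]
    rw [← Finset.sum_div, Finset.sum_sub_distrib, ← Finset.mul_sum, hPY.2, hQYsum, hc]
    ring_nf
  have hnone_le : ∑ y, P' (none, y) *
      Real.log (P' (none, y) / (pushf P' Prod.fst none * pushf P' Prod.snd (y))) ≤ c * Real.log μ := by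
    calc ∑ y, P' (none, y) *
          Real.log (P' (none, y) / (pushf P' Prod.fst none * pushf P' Prod.snd y))
        ≤ ∑ y, P' (none, y) * Real.log μ := by
          refine Finset.sum_le_sum fun y _ => ?_
          rw [hP'V_none, hmarg]
          rcases eq_or_lt_of_le (hP'nn (none, y)) with h0 | hpos
          · rw [← h0]; simp
          · have hale : P' (none, y) ≤ c := by
              rw [← hasum]
              exact Finset.single_le_sum (fun y' _ => hP'nn (none, y')) (Finset.mem_univ y)
            have hdenpos : 0 < c * PY y := mul_pos hcpos (hPYpos y)
            have hargpos : 0 < P' (none, y) / (c * PY y) := div_pos hpos hdenpos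
            have harg_le : P' (none, y) / (c * PY y) ≤ μ := by
              rw [div_le_iff₀ hdenpos]
              calc P' (none, y) ≤ c := hale
                _ = μ * (c * μ⁻¹) := by field_simp
                _ ≤ μ * (c * PY y) := by
                    have := hPYge y
                    have h1 : c * μ⁻¹ ≤ c * PY y :=
                      mul_le_mul_of_nonneg_left this (le_of_lt hcpos)
                    exact mul_le_mul_of_nonneg_left h1 (le_of_lt hμpos)
            exact mul_le_mul_of_nonneg_left
              (Real.log_le_log hargpos harg_le) (le_of_lt hpos)
      _ = c * Real.log μ := by rw [← Finset.sum_mul, hasum]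
  -- the "some" part
  have hsome_eq : ∑ v, ∑ y, P' (some v, y) *
      Real.log (P' (some v, y) / (pushf P' Prod.fst (some v) * pushf P' Prod.snd y))
      = (1 / (1 + θ)) * (MIof Q Prod.fst Prod.snd + KL QY PY) := by
    have key : ∀ v y, P' (some v, y) *
        Real.log (P' (some v, y) / (pushf P' Prod.fst (some v) * pushf P' Prod.snd y))
        = (1 / (1 + θ)) * (Q (v, y) * Real.log (Q (v, y) / (QV v * QY y))
            + Q (v, y) * Real.log (QY y / PY y)) := by
      intro v y
      rw [hP'some, hP'V_some, hmarg]
      rcases eq_or_lt_of_le (hQ.1 (v, y)) with h0 | hpos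
      · rw [← h0]; simp
      · have hQVpos : 0 < QV v := by
          rw [hQVs]
          exact lt_of_lt_of_le hpos
            (Finset.single_le_sum (fun y' _ => hQ.1 (v, y')) (Finset.mem_univ y))
        have hQYpos : 0 < QY y := by
          rw [hQYs]
          exact lt_of_lt_of_le hpos
            (Finset.single_le_sum (fun v' _ => hQ.1 (v', y)) (Finset.mem_univ v))
        have hPYp := hPYpos y
        have harg : Q (v, y) / (1 + θ) / (QV v / (1 + θ) * PY y)
            = Q (v, y) / (QV v * PY y) := by
          field_simp
        rw [harg]
        rw [Real.log_div (ne_of_gt hpos) (by positivity),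
            Real.log_mul (ne_of_gt hQVpos) (ne_of_gt hPYp),
            Real.log_div (ne_of_gt hpos) (by positivity),
            Real.log_mul (ne_of_gt hQVpos) (ne_of_gt hQYpos),
            Real.log_div (ne_of_gt hQYpos) (ne_of_gt hPYp)]
        field_simp
        ring
    simp_rw [key, ← Finset.mul_sum]
    congr 1
    rw [MIof_prod_eq Q]
    simp_rw [Finset.sum_add_distrib]
    congr 1
    unfold KL
    rw [Finset.sum_comm]
    refine Finset.sum_congr rfl fun y _ => ?_
    rw [← Finset.sum_mul, ← hQYs y]
  rw [hsome_eq]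
  linarith [hnone_le]
end

section
/- Let V, Y, Z be finite nonempty sets, let Q be a pmf on V×Y with marginals Q_V, Q_Y, let P_Y be a pmf on Y with P_Y(y) > 0 for all y, let θ > 0 satisfy |Q_Y(y) − P_Y(y)| ≤ θ·P_Y(y) for all y, and let W(z|y) be a channel from Y to Z (a pmf on Z for each y ∈ Y). Let Ṽ := V ∪ {v*} with v* a new symbol and define the pmf P' on Ṽ×Y by P'(v,y) := Q(v,y)/(1+θ) for v ∈ V and P'(v*,y) := ((1+θ)·P_Y(y) − Q_Y(y))/(1+θ). Extend Q to V×Y×Z by Q(v,y,z) := Q(v,y)·W(z|y) and P' to Ṽ×Y×Z by P'(v,y,z) := P'(v,y)·W(z|y). Then I_Q(V;Z) ≤ (1+θ)·I_{P'}(Ṽ;Z), and consequently I_Q(V;Z) ≤ I_{P'}(Ṽ;Z) + θ·log|Z|. -/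
open scoped BigOperators Classical

section aux

private lemma gibbs_pt (p q : ℝ) (hp : 0 ≤ p) (hq : 0 ≤ q) (h : q = 0 → p = 0) :
    p - q ≤ p * Real.log (p / q) := by
  rcases eq_or_lt_of_le hp with hp0 | hp0
  · simp [← hp0]; linarith
  · have hq0 : 0 < q := lt_of_le_of_ne hq (fun e => by have := h e.symm; linarith)
    have hl := Real.log_le_sub_one_of_pos (div_pos hq0 hp0)
    have hlog : Real.log (p/q) = - Real.log (q/p) := by
      rw [← Real.log_inv]; congr 1; field_simp
    have hpq : p * (q / p) = q := by field_simp
    rw [hlog]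
    nlinarith [mul_le_mul_of_nonneg_left hl hp0.le]

private lemma gibbs_sum {ι : Type} [Fintype ι] (p q : ι → ℝ)
    (hp : ∀ i, 0 ≤ p i) (hq : ∀ i, 0 ≤ q i) (h : ∀ i, q i = 0 → p i = 0) :
    (∑ i, p i) - (∑ i, q i) ≤ ∑ i, p i * Real.log (p i / q i) := by
  rw [← Finset.sum_sub_distrib]
  exact Finset.sum_le_sum fun i _ => gibbs_pt _ _ (hp i) (hq i) (h i)

private lemma sum_pos_exists {ι : Type} [Fintype ι] (f : ι → ℝ)
    (hf : ∀ i, 0 ≤ f i) (h : 0 < ∑ i, f i) : ∃ i, 0 < f i := by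
  by_contra hc
  push_neg at hc
  have : (∑ i, f i) ≤ 0 := Finset.sum_nonpos fun i _ => hc i
  linarith

private lemma le_sum_of_mem {ι : Type} [Fintype ι] (f : ι → ℝ)
    (hf : ∀ i, 0 ≤ f i) (i : ι) : f i ≤ ∑ j, f j :=
  Finset.single_le_sum (fun j _ => hf j) (Finset.mem_univ i)

private lemma div_trick (a b d c : ℝ) (hc : c ≠ 0) : (a/c)/((b/c)*d) = a/(b*d) := by
  rcases eq_or_ne b 0 with hb | hb
  · simp [hb]
  rcases eq_or_ne d 0 with hd | hd
  · simp [hd]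
  field_simp

section push
variable {A Y Z : Type} [Fintype A] [Fintype Y] [Fintype Z]

private lemma push_pair (P : A × Y × Z → ℝ) (a : A) (z : Z) :
    pushf P (fun ω => (ω.1, ω.2.2)) (a, z) = ∑ y, P (a, y, z) := by
  simp [pushf, Fintype.sum_prod_type, Prod.ext_iff, ite_and]

private lemma push_fst (P : A × Y × Z → ℝ) (a : A) :
    pushf P (fun ω => ω.1) a = ∑ y, ∑ z, P (a, y, z) := by
  rw [pushf, Fintype.sum_prod_type]
  rw [Finset.sum_eq_single a (fun b _ hb => by simp [hb]) (by simp)]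
  simp [Fintype.sum_prod_type]

private lemma push_thd (P : A × Y × Z → ℝ) (z : Z) :
    pushf P (fun ω => ω.2.2) z = ∑ a, ∑ y, P (a, y, z) := by
  simp [pushf, Fintype.sum_prod_type]

end push
end aux

/-- **Adding an extra symbol: effect on `I(V;Z)` through a channel (Lemma 6,
part 2).** With `P'` built from `Q` and `P_Y` as before and both `Q`, `P'`
extended to `Z` through the channel `W`, one has
`I_Q(V;Z) ≤ (1+θ)·I_{P'}(Ṽ;Z)` and hence `I_Q(V;Z) ≤ I_{P'}(Ṽ;Z) + θ·log|Z|`. -/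
theorem extra_symbol_channel_bound
    (V Y Z : Type) [Fintype V] [Fintype Y] [Fintype Z]
    [Nonempty V] [Nonempty Y] [Nonempty Z]
    (Q : V × Y → ℝ) (hQ : IsPMF Q)
    (PY : Y → ℝ) (hPY : IsPMF PY) (hPYpos : ∀ y, 0 < PY y)
    (θ : ℝ) (hθ : 0 < θ)
    (hclose : ∀ y, |pushf Q Prod.snd y - PY y| ≤ θ * PY y)
    (W : Y → Z → ℝ) (hW : ∀ y, IsPMF (W y))
    (P' : Option V × Y → ℝ)
    (hP'some : ∀ (v : V) (y : Y), P' (some v, y) = Q (v, y) / (1 + θ))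
    (hP'none : ∀ y : Y,
      P' (none, y) = ((1 + θ) * PY y - pushf Q Prod.snd y) / (1 + θ)) :
    MIof (fun ω : V × Y × Z => Q (ω.1, ω.2.1) * W ω.2.1 ω.2.2)
        (fun ω => ω.1) (fun ω => ω.2.2)
      ≤ (1 + θ) * MIof (fun ω : Option V × Y × Z => P' (ω.1, ω.2.1) * W ω.2.1 ω.2.2)
          (fun ω => ω.1) (fun ω => ω.2.2) ∧
    MIof (fun ω : V × Y × Z => Q (ω.1, ω.2.1) * W ω.2.1 ω.2.2)
        (fun ω => ω.1) (fun ω => ω.2.2)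
      ≤ MIof (fun ω : Option V × Y × Z => P' (ω.1, ω.2.1) * W ω.2.1 ω.2.2)
          (fun ω => ω.1) (fun ω => ω.2.2)
        + θ * Real.log (Fintype.card Z : ℝ) := by
  
  have h1θ : (0:ℝ) < 1 + θ := by linarith
  have h1θ' : (1:ℝ) + θ ≠ 0 := ne_of_gt h1θ
  set q2 : V → Z → ℝ := fun v z => ∑ y, Q (v, y) * W y z with hq2def
  set qV : V → ℝ := fun v => ∑ y, Q (v, y) with hqVdef
  set qY : Y → ℝ := fun y => ∑ v, Q (v, y) with hqYdef
  set qZ : Z → ℝ := fun z => ∑ y, qY y * W y z with hqZdef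
  set p2 : Option V → Z → ℝ := fun o z => ∑ y, P' (o, y) * W y z with hp2def
  set pV : Option V → ℝ := fun o => ∑ y, P' (o, y) with hpVdef
  set pZ : Z → ℝ := fun z => ∑ y, PY y * W y z with hpZdef
  have hQ0 : ∀ v y, 0 ≤ Q (v, y) := fun v y => hQ.1 (v, y)
  have hW0 : ∀ y z, 0 ≤ W y z := fun y z => (hW y).1 z
  have hW1 : ∀ y, ∑ z, W y z = 1 := fun y => (hW y).2
  have hWle1 : ∀ y z, W y z ≤ 1 := fun y z => by
    have := le_sum_of_mem (W y) (hW0 y) z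
    rwa [hW1 y] at this
  have hqYpush : ∀ y, pushf Q Prod.snd y = qY y := by
    intro y; simp [pushf, Fintype.sum_prod_type, hqYdef]
  have hqYQ : ∀ v y, Q (v, y) ≤ qY y := fun v y =>
    le_sum_of_mem (fun v' => Q (v', y)) (fun v' => hQ0 v' y) v
  have hqYnn : ∀ y, 0 ≤ qY y := fun y =>
    Finset.sum_nonneg fun v _ => hQ0 v y
  have hqYless : ∀ y, qY y ≤ (1 + θ) * PY y := by
    intro y
    have h := hclose y
    rw [hqYpush y] at h
    have := (abs_le.mp h).2
    linarith
  have hP'0 : ∀ o y, 0 ≤ P' (o, y) := by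
    rintro (_ | v) y
    · rw [hP'none y, hqYpush y]
      exact div_nonneg (by linarith [hqYless y]) h1θ.le
    · rw [hP'some v y]
      exact div_nonneg (hQ0 v y) h1θ.le
  have hpY : ∀ y, ∑ o : Option V, P' (o, y) = PY y := by
    intro y
    rw [Fintype.sum_option, hP'none y, hqYpush y]
    have hs : ∑ v : V, P' (some v, y) = qY y / (1 + θ) := by
      simp only [hqYdef, Finset.sum_div]
      exact Finset.sum_congr rfl fun v _ => hP'some v y
    rw [hs]
    field_simp
    ring
  -- nonnegativity
  have hq2nn : ∀ v z, 0 ≤ q2 v z := fun v z =>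
    Finset.sum_nonneg fun y _ => mul_nonneg (hQ0 v y) (hW0 y z)
  have hqVnn : ∀ v, 0 ≤ qV v := fun v => Finset.sum_nonneg fun y _ => hQ0 v y
  have hqZnn : ∀ z, 0 ≤ qZ z := fun z =>
    Finset.sum_nonneg fun y _ => mul_nonneg (hqYnn y) (hW0 y z)
  have hp2nn : ∀ o z, 0 ≤ p2 o z := fun o z =>
    Finset.sum_nonneg fun y _ => mul_nonneg (hP'0 o y) (hW0 y z)
  have hpVnn : ∀ o, 0 ≤ pV o := fun o => Finset.sum_nonneg fun y _ => hP'0 o y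
  have hpZnn : ∀ z, 0 ≤ pZ z := fun z =>
    Finset.sum_nonneg fun y _ => mul_nonneg (hPYpos y).le (hW0 y z)
  -- positivity propagation
  have hposQ : ∀ v z, 0 < q2 v z → 0 < qV v ∧ 0 < qZ z ∧ 0 < pZ z := by
    intro v z h
    obtain ⟨y0, hy0⟩ := sum_pos_exists (fun y => Q (v, y) * W y z)
      (fun y => mul_nonneg (hQ0 v y) (hW0 y z)) h
    have hQy : 0 < Q (v, y0) ∧ 0 < W y0 z := by
      rcases mul_pos_iff.mp hy0 with ⟨h1, h2⟩ | ⟨h1, _⟩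
      · exact ⟨h1, h2⟩
      · exact absurd h1 (not_lt.mpr (hQ0 v y0))
    refine ⟨lt_of_lt_of_le hQy.1 (le_sum_of_mem _ (fun y => hQ0 v y) y0), ?_, ?_⟩
    · exact lt_of_lt_of_le (mul_pos (lt_of_lt_of_le hQy.1 (hqYQ v y0)) hQy.2)
        (le_sum_of_mem (fun y => qY y * W y z)
          (fun y => mul_nonneg (hqYnn y) (hW0 y z)) y0)
    · exact lt_of_lt_of_le (mul_pos (hPYpos y0) hQy.2)
        (le_sum_of_mem (fun y => PY y * W y z)
          (fun y => mul_nonneg (hPYpos y).le (hW0 y z)) y0)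
  have hposP : ∀ o z, 0 < p2 o z → 0 < pV o ∧ 0 < pZ z := by
    intro o z h
    obtain ⟨y0, hy0⟩ := sum_pos_exists (fun y => P' (o, y) * W y z)
      (fun y => mul_nonneg (hP'0 o y) (hW0 y z)) h
    have hPy : 0 < P' (o, y0) ∧ 0 < W y0 z := by
      rcases mul_pos_iff.mp hy0 with ⟨h1, h2⟩ | ⟨h1, _⟩
      · exact ⟨h1, h2⟩
      · exact absurd h1 (not_lt.mpr (hP'0 o y0))
    refine ⟨lt_of_lt_of_le hPy.1 (le_sum_of_mem _ (fun y => hP'0 o y) y0), ?_⟩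
    exact lt_of_lt_of_le (mul_pos (hPYpos y0) hPy.2)
      (le_sum_of_mem (fun y => PY y * W y z)
        (fun y => mul_nonneg (hPYpos y).le (hW0 y z)) y0)
  -- sums to one
  have hqY1 : ∑ y, qY y = 1 := by
    simp only [hqYdef]
    rw [Finset.sum_comm, ← Fintype.sum_prod_type]
    exact hQ.2
  have hqZ1 : ∑ z, qZ z = 1 := by
    simp only [hqZdef]
    rw [Finset.sum_comm]
    calc ∑ y, ∑ z, qY y * W y z = ∑ y, qY y := by
          refine Finset.sum_congr rfl fun y _ => ?_
          rw [← Finset.mul_sum, hW1 y, mul_one]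
      _ = 1 := hqY1
  have hpZ1 : ∑ z, pZ z = 1 := by
    simp only [hpZdef]
    rw [Finset.sum_comm]
    calc ∑ y, ∑ z, PY y * W y z = ∑ y, PY y := by
          refine Finset.sum_congr rfl fun y _ => ?_
          rw [← Finset.mul_sum, hW1 y, mul_one]
      _ = 1 := hPY.2
  -- marginals
  have hmargQ : ∀ z, ∑ v, q2 v z = qZ z := by
    intro z
    simp only [hq2def, hqZdef, hqYdef]
    rw [Finset.sum_comm]
    exact Finset.sum_congr rfl fun y _ => (Finset.sum_mul ..).symm
  have hmargP : ∀ z, ∑ o : Option V, p2 o z = pZ z := by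
    intro z
    simp only [hp2def, hpZdef]
    rw [Finset.sum_comm]
    refine Finset.sum_congr rfl fun y _ => ?_
    rw [← Finset.sum_mul, hpY y]
  -- MI computations
  have hIQ : MIof (fun ω : V × Y × Z => Q (ω.1, ω.2.1) * W ω.2.1 ω.2.2)
      (fun ω => ω.1) (fun ω => ω.2.2)
      = ∑ v, ∑ z, q2 v z * Real.log (q2 v z / (qV v * qZ z)) := by
    simp only [MIof, KL, Fintype.sum_prod_type]
    refine Finset.sum_congr rfl fun v _ => Finset.sum_congr rfl fun z _ => ?_
    rw [push_pair, push_fst, push_thd]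
    have eV : (∑ y, ∑ z', Q (v, y) * W y z') = qV v := by
      simp only [hqVdef]
      exact Finset.sum_congr rfl fun y _ => by rw [← Finset.mul_sum, hW1 y, mul_one]
    have eZ : (∑ v', ∑ y, Q (v', y) * W y z) = qZ z := by
      simp only [hqZdef, hqYdef]
      rw [Finset.sum_comm]
      exact Finset.sum_congr rfl fun y _ => (Finset.sum_mul ..).symm
    rw [eV, eZ]
  have hIP : MIof (fun ω : Option V × Y × Z => P' (ω.1, ω.2.1) * W ω.2.1 ω.2.2)
      (fun ω => ω.1) (fun ω => ω.2.2)
      = ∑ o : Option V, ∑ z, p2 o z * Real.log (p2 o z / (pV o * pZ z)) := by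
    simp only [MIof, KL, Fintype.sum_prod_type]
    refine Finset.sum_congr rfl fun o _ => Finset.sum_congr rfl fun z _ => ?_
    rw [push_pair, push_fst, push_thd]
    have eV : (∑ y, ∑ z', P' (o, y) * W y z') = pV o := by
      simp only [hpVdef]
      exact Finset.sum_congr rfl fun y _ => by rw [← Finset.mul_sum, hW1 y, mul_one]
    have eZ : (∑ o' : Option V, ∑ y, P' (o', y) * W y z) = pZ z := by
      simp only [hpZdef]
      rw [Finset.sum_comm]
      refine Finset.sum_congr rfl fun y _ => ?_
      rw [← Finset.sum_mul, hpY y]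
    rw [eV, eZ]
  -- step A
  have habsQ : ∀ z, pZ z = 0 → qZ z = 0 := by
    intro z h
    by_contra hne
    have hpos : 0 < qZ z := lt_of_le_of_ne (hqZnn z) (Ne.symm hne)
    obtain ⟨y0, hy0⟩ := sum_pos_exists (fun y => qY y * W y z)
      (fun y => mul_nonneg (hqYnn y) (hW0 y z)) hpos
    have hWz : 0 < W y0 z := by
      rcases mul_pos_iff.mp hy0 with ⟨_, h2⟩ | ⟨h1, _⟩
      · exact h2
      · exact absurd h1 (not_lt.mpr (hqYnn y0))
    have : 0 < pZ z := lt_of_lt_of_le (mul_pos (hPYpos y0) hWz)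
      (le_sum_of_mem (fun y => PY y * W y z)
        (fun y => mul_nonneg (hPYpos y).le (hW0 y z)) y0)
    linarith
  have keyA : ∀ v z, q2 v z * Real.log (q2 v z / (qV v * qZ z))
      = q2 v z * Real.log (q2 v z / (qV v * pZ z))
        - q2 v z * Real.log (qZ z / pZ z) := by
    intro v z
    rcases eq_or_lt_of_le (hq2nn v z) with h0 | hpos
    · rw [← h0]; ring
    · obtain ⟨hqVp, hqZp, hpZp⟩ := hposQ v z hpos
      rw [← mul_sub]
      congr 1
      rw [Real.log_div (ne_of_gt hpos) (by positivity),
          Real.log_div (ne_of_gt hpos) (by positivity),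
          Real.log_div (ne_of_gt hqZp) (ne_of_gt hpZp),
          Real.log_mul (ne_of_gt hqVp) (ne_of_gt hqZp),
          Real.log_mul (ne_of_gt hqVp) (ne_of_gt hpZp)]
      ring
  have hA : (∑ v, ∑ z, q2 v z * Real.log (q2 v z / (qV v * qZ z)))
      ≤ ∑ v, ∑ z, q2 v z * Real.log (q2 v z / (qV v * pZ z)) := by
    have e : (∑ v, ∑ z, q2 v z * Real.log (q2 v z / (qV v * qZ z)))
        = (∑ v, ∑ z, q2 v z * Real.log (q2 v z / (qV v * pZ z)))
          - ∑ z, qZ z * Real.log (qZ z / pZ z) := by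
      have e1 : (∑ v, ∑ z, q2 v z * Real.log (q2 v z / (qV v * qZ z)))
          = (∑ v, ∑ z, q2 v z * Real.log (q2 v z / (qV v * pZ z)))
            - ∑ v, ∑ z, q2 v z * Real.log (qZ z / pZ z) := by
        rw [← Finset.sum_sub_distrib]
        refine Finset.sum_congr rfl fun v _ => ?_
        rw [← Finset.sum_sub_distrib]
        exact Finset.sum_congr rfl fun z _ => keyA v z
      rw [e1]
      congr 1
      rw [Finset.sum_comm]
      refine Finset.sum_congr rfl fun z _ => ?_
      rw [← Finset.sum_mul, hmargQ z]
    have hg := gibbs_sum qZ pZ hqZnn hpZnn habsQ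
    rw [hqZ1, hpZ1] at hg
    rw [e]
    linarith
  -- step B
  have hB : (∑ v, ∑ z, q2 v z * Real.log (q2 v z / (qV v * pZ z)))
      = (1 + θ) * ∑ v, ∑ z,
          p2 (some v) z * Real.log (p2 (some v) z / (pV (some v) * pZ z)) := by
    rw [Finset.mul_sum]
    refine Finset.sum_congr rfl fun v _ => ?_
    rw [Finset.mul_sum]
    refine Finset.sum_congr rfl fun z _ => ?_
    have e2 : p2 (some v) z = q2 v z / (1 + θ) := by
      simp only [hp2def, hq2def, Finset.sum_div]
      refine Finset.sum_congr rfl fun y _ => ?_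
      rw [hP'some v y]; ring
    have eV2 : pV (some v) = qV v / (1 + θ) := by
      simp only [hpVdef, hqVdef, Finset.sum_div]
      exact Finset.sum_congr rfl fun y _ => hP'some v y
    rw [e2, eV2, div_trick _ _ _ _ h1θ']
    field_simp
  -- split over Option
  have hsplit : (∑ o : Option V, ∑ z, p2 o z * Real.log (p2 o z / (pV o * pZ z)))
      = (∑ z, p2 none z * Real.log (p2 none z / (pV none * pZ z)))
        + ∑ v, ∑ z, p2 (some v) z * Real.log (p2 (some v) z / (pV (some v) * pZ z)) := by
    rw [Fintype.sum_option]
  have hNne : 0 ≤ ∑ z, p2 none z * Real.log (p2 none z / (pV none * pZ z)) := by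
    have habs : ∀ z, pV none * pZ z = 0 → p2 none z = 0 := by
      intro z h
      by_contra hne
      have hpos : 0 < p2 none z := lt_of_le_of_ne (hp2nn none z) (Ne.symm hne)
      obtain ⟨h1, h2⟩ := hposP none z hpos
      nlinarith
    have hg := gibbs_sum (fun z => p2 none z) (fun z => pV none * pZ z)
      (hp2nn none) (fun z => mul_nonneg (hpVnn none) (hpZnn z)) habs
    have e1 : ∑ z, p2 none z = pV none := by
      simp only [hp2def, hpVdef]
      rw [Finset.sum_comm]
      refine Finset.sum_congr rfl fun y _ => ?_
      rw [← Finset.mul_sum, hW1 y, mul_one]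
    have e2 : ∑ z, pV none * pZ z = pV none := by
      rw [← Finset.mul_sum, hpZ1, mul_one]
    rw [e1, e2] at hg
    linarith
  -- first conclusion
  have hfirst : MIof (fun ω : V × Y × Z => Q (ω.1, ω.2.1) * W ω.2.1 ω.2.2)
      (fun ω => ω.1) (fun ω => ω.2.2)
      ≤ (1 + θ) * MIof (fun ω : Option V × Y × Z => P' (ω.1, ω.2.1) * W ω.2.1 ω.2.2)
          (fun ω => ω.1) (fun ω => ω.2.2) := by
    rw [hIQ, hIP, hsplit]
    calc (∑ v, ∑ z, q2 v z * Real.log (q2 v z / (qV v * qZ z)))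
        ≤ ∑ v, ∑ z, q2 v z * Real.log (q2 v z / (qV v * pZ z)) := hA
      _ = (1 + θ) * ∑ v, ∑ z,
            p2 (some v) z * Real.log (p2 (some v) z / (pV (some v) * pZ z)) := hB
      _ ≤ (1 + θ) * ((∑ z, p2 none z * Real.log (p2 none z / (pV none * pZ z)))
            + ∑ v, ∑ z, p2 (some v) z * Real.log (p2 (some v) z / (pV (some v) * pZ z))) := by
          apply mul_le_mul_of_nonneg_left _ h1θ.le
          linarith
  -- step D : I_{P'} ≤ log |Z|
  have hcard : (0:ℝ) < (Fintype.card Z : ℝ) := by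
    exact_mod_cast Fintype.card_pos
  have hD : (∑ o : Option V, ∑ z, p2 o z * Real.log (p2 o z / (pV o * pZ z)))
      ≤ Real.log (Fintype.card Z : ℝ) := by
    have t1 : ∀ o z, p2 o z * Real.log (p2 o z / (pV o * pZ z))
        ≤ p2 o z * (- Real.log (pZ z)) := by
      intro o z
      rcases eq_or_lt_of_le (hp2nn o z) with h0 | hpos
      · rw [← h0]; simp
      · obtain ⟨hpVp, hpZp⟩ := hposP o z hpos
        have hle : p2 o z ≤ pV o := by
          simp only [hp2def, hpVdef]
          refine Finset.sum_le_sum fun y _ => ?_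
          exact mul_le_of_le_one_right (hP'0 o y) (hWle1 y z)
        apply mul_le_mul_of_nonneg_left _ hpos.le
        rw [Real.log_div (ne_of_gt hpos) (by positivity),
            Real.log_mul (ne_of_gt hpVp) (ne_of_gt hpZp)]
        have := Real.log_le_log hpos hle
        linarith
    calc (∑ o : Option V, ∑ z, p2 o z * Real.log (p2 o z / (pV o * pZ z)))
        ≤ ∑ o : Option V, ∑ z, p2 o z * (- Real.log (pZ z)) :=
          Finset.sum_le_sum fun o _ => Finset.sum_le_sum fun z _ => t1 o z
      _ = ∑ z, pZ z * (- Real.log (pZ z)) := by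
          rw [Finset.sum_comm]
          refine Finset.sum_congr rfl fun z _ => ?_
          rw [← Finset.sum_mul, hmargP z]
      _ ≤ Real.log (Fintype.card Z : ℝ) := by
          have hg := gibbs_sum pZ (fun _ => ((Fintype.card Z : ℝ))⁻¹) hpZnn
            (fun _ => by positivity)
            (fun z h => absurd h (by positivity))
          have hsc : ∑ _z : Z, ((Fintype.card Z : ℝ))⁻¹ = 1 := by
            rw [Finset.sum_const, Finset.card_univ, nsmul_eq_mul]
            field_simp
          have hterm : ∀ z, pZ z * Real.log (pZ z / ((Fintype.card Z : ℝ))⁻¹)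
              = pZ z * Real.log (pZ z) + pZ z * Real.log (Fintype.card Z : ℝ) := by
            intro z
            rcases eq_or_lt_of_le (hpZnn z) with h0 | hpos
            · rw [← h0]; ring
            · rw [Real.log_div (ne_of_gt hpos) (by positivity), Real.log_inv]
              ring
          rw [hpZ1, hsc] at hg
          have e3 : (∑ z, pZ z * Real.log (pZ z / ((Fintype.card Z : ℝ))⁻¹))
              = (∑ z, pZ z * Real.log (pZ z)) + Real.log (Fintype.card Z : ℝ) := by
            calc (∑ z, pZ z * Real.log (pZ z / ((Fintype.card Z : ℝ))⁻¹))
                = ∑ z, (pZ z * Real.log (pZ z) + pZ z * Real.log (Fintype.card Z : ℝ)) :=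
                  Finset.sum_congr rfl fun z _ => hterm z
              _ = (∑ z, pZ z * Real.log (pZ z))
                  + (∑ z, pZ z) * Real.log (Fintype.card Z : ℝ) := by
                  rw [Finset.sum_add_distrib, Finset.sum_mul]
              _ = (∑ z, pZ z * Real.log (pZ z)) + Real.log (Fintype.card Z : ℝ) := by
                  rw [hpZ1, one_mul]
          rw [e3] at hg
          have e4 : (∑ z, pZ z * (- Real.log (pZ z))) = - ∑ z, pZ z * Real.log (pZ z) := by
            rw [← Finset.sum_neg_distrib]
            exact Finset.sum_congr rfl fun z _ => by ring
          rw [e4]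
          linarith
  refine ⟨hfirst, ?_⟩
  have h2 : θ * MIof (fun ω : Option V × Y × Z => P' (ω.1, ω.2.1) * W ω.2.1 ω.2.2)
      (fun ω => ω.1) (fun ω => ω.2.2) ≤ θ * Real.log (Fintype.card Z : ℝ) := by
    apply mul_le_mul_of_nonneg_left _ hθ.le
    rw [hIP]
    exact hD
  nlinarith [hfirst, h2]
end
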